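/- arXiv:0710.0658 — 5 statements merged into one kernel-verified Lean document; each statement's English description precedes it below -/
import Mathlib

section
/- If X is a nonnegative integer random variable with P(X ≥ x) ≤ A·x^(−ε) for all x ≥ 1 (with A > 0, ε > 0), then for all sufficiently large q and all l ≥ 1, the q-ary entropy h_l of the l-th digit X(l) in the base-q expansion of X satisfies h_l ≤ B·l·q^(−lε) for a constant B depending only on A and ε. -/
open MeasureTheory Real

lemma gibbs_term {t u : ℝ} (ht : 0 ≤ t) (hu : 0 < u) :
    -(t * Real.log t) ≤ u - t - t * Real.log u := by
  rcases eq_or_lt_of_le ht with h | h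
  · simp [← h]; linarith
  · have h1 : Real.log (u / t) ≤ u / t - 1 := Real.log_le_sub_one_of_pos (by positivity)
    have h2 : Real.log (u / t) = Real.log u - Real.log t := Real.log_div hu.ne' h.ne'
    have h3 := mul_le_mul_of_nonneg_left h1 ht
    rw [h2, mul_sub, mul_sub, mul_div_cancel₀ _ h.ne', mul_one] at h3
    linarith

/-- If `X` is a nonnegative integer random variable with power-law tail
`P(X ≥ x) ≤ A·x^(−ε)`, then for all sufficiently large `q` and all `l ≥ 1`, the `q`-ary
entropy `h_l` of the `l`-th digit of `X` in base `q` satisfies `h_l ≤ B·l·q^(−lε)`,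
with `B` and the threshold on `q` depending only on `A` and `ε`. -/
theorem digit_entropy_tail_bound (A ε : ℝ) (hA : 0 < A) (hε : 0 < ε) :
    ∃ B : ℝ, 0 < B ∧ ∃ q₀ : ℕ, ∀ (Ω : Type) (_ : MeasurableSpace Ω) (μ : Measure Ω),
      IsProbabilityMeasure μ → ∀ X : Ω → ℕ, Measurable X →
      (∀ x : ℕ, 1 ≤ x → (μ {ω | x ≤ X ω}).toReal ≤ A * (x : ℝ) ^ (-ε)) →
      ∀ q : ℕ, q₀ ≤ q → ∀ l : ℕ, 1 ≤ l →
      -(∑ x ∈ Finset.range q,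
          (μ {ω | X ω / q ^ l % q = x}).toReal *
            Real.logb q ((μ {ω | X ω / q ^ l % q = x}).toReal))
        ≤ B * l * (q : ℝ) ^ (-(l : ℝ) * ε) := by
  set C : ℝ := max 0 (-Real.log A) with hCdef
  have hC0 : 0 ≤ C := le_max_left _ _
  have hClog : -Real.log A ≤ C := le_max_right _ _
  refine ⟨A * (3 + ε + C), by positivity, max 3 (⌈(2 * A) ^ (1 / ε)⌉₊ + 1), ?_⟩
  intro Ω mΩ μ hμ X hX htail q hq l hl
  have hq3 : 3 ≤ q := le_trans (le_max_left _ _) hq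
  have hq0 : 0 < q := by omega
  have hq0R : (0 : ℝ) < q := by exact_mod_cast hq0
  have hq1R : (1 : ℝ) ≤ q := by exact_mod_cast hq0
  have hl1R : (1 : ℝ) ≤ l := by exact_mod_cast hl
  -- log q ≥ 1
  have hlogq : 1 ≤ Real.log q := by
    rw [Real.le_log_iff_exp_le hq0R]
    calc Real.exp 1 ≤ 2.7182818286 := Real.exp_one_lt_d9.le
      _ ≤ (3 : ℝ) := by norm_num
      _ ≤ q := by exact_mod_cast hq3
  have hlogq0 : 0 < Real.log q := lt_of_lt_of_le one_pos hlogq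
  -- u := A * q^(-lε) and u ≤ 1/2
  set u : ℝ := A * (q : ℝ) ^ (-(l : ℝ) * ε) with hudef
  have hu0 : 0 < u := by positivity
  have hceil : ((2 * A) ^ (1 / ε) : ℝ) ≤ q := by
    have h1 : (⌈(2 * A) ^ (1 / ε)⌉₊ + 1 : ℕ) ≤ q := le_trans (le_max_right _ _) hq
    calc ((2 * A) ^ (1 / ε) : ℝ) ≤ (⌈(2 * A) ^ (1 / ε)⌉₊ : ℝ) := Nat.le_ceil _
      _ ≤ q := by exact_mod_cast le_trans (Nat.le_succ _) h1
  have hqε : 2 * A ≤ (q : ℝ) ^ ε := by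
    have := Real.rpow_le_rpow (by positivity) hceil hε.le
    rwa [one_div, Real.rpow_inv_rpow (by positivity) hε.ne'] at this
  have hu_half : u ≤ 1/2 := by
    have h1 : (q:ℝ) ^ (-(l : ℝ) * ε) ≤ (q:ℝ) ^ (-ε) :=
      Real.rpow_le_rpow_of_exponent_le hq1R (by nlinarith)
    have h2 : (q:ℝ) ^ (-ε) ≤ (2 * A)⁻¹ := by
      rw [Real.rpow_neg hq0R.le]
      exact inv_anti₀ (by linarith) hqε
    calc u ≤ A * (2 * A)⁻¹ := by
          exact mul_le_mul_of_nonneg_left (le_trans h1 h2) hA.le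
      _ = 1/2 := by field_simp
  -- the digit function
  set D : Ω → ℕ := fun ω => X ω / q ^ l % q with hDdef
  have hD : Measurable D := (measurable_from_top (f := fun n : ℕ => n / q ^ l % q)).comp hX
  set p : ℕ → ℝ := fun x => (μ (D ⁻¹' {x})).toReal with hpdef
  have hp0 : ∀ x, 0 ≤ p x := fun x => ENNReal.toReal_nonneg
  have hmeas : ∀ y : ℕ, MeasurableSet (D ⁻¹' {y}) := fun y => hD (measurableSet_singleton y)
  -- sum over all digits is 1
  have hsum1 : ∑ x ∈ Finset.range q, p x = 1 := by
    rw [hpdef, ← ENNReal.toReal_sum (fun a _ => measure_ne_top μ _)]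
    rw [sum_measure_preimage_singleton _ (fun y _ => hmeas y)]
    have : D ⁻¹' ↑(Finset.range q) = Set.univ := by
      ext ω
      simp [hDdef, Nat.mod_lt _ hq0]
    rw [this, measure_univ, ENNReal.toReal_one]
  set S : Finset ℕ := (Finset.range q).erase 0 with hSdef
  have h0mem : 0 ∈ Finset.range q := by simp [hq0]
  have hcardS : (S.card : ℝ) = (q : ℝ) - 1 := by
    rw [hSdef, Finset.card_erase_of_mem h0mem, Finset.card_range]
    have : 1 ≤ q := hq0
    push_cast [this]
    ring
  set pS : ℝ := ∑ x ∈ S, p x with hpSdef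
  have hpS0 : 0 ≤ pS := Finset.sum_nonneg fun x _ => hp0 x
  have hsplit : pS + p 0 = 1 := by
    rw [hpSdef, hSdef, Finset.sum_erase_add _ _ h0mem, hsum1]
  -- tail bound on pS
  have hpSu : pS ≤ u := by
    have hsub : D ⁻¹' ↑S ⊆ {ω | q ^ l ≤ X ω} := by
      intro ω hω
      simp only [hSdef, Set.mem_preimage, Finset.coe_erase, Finset.coe_range,
        Set.mem_diff, Set.mem_Iio, Set.mem_singleton_iff] at hω
      have hne : D ω ≠ 0 := hω.2
      have hdiv : X ω / q ^ l ≠ 0 := by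
        intro h
        apply hne
        simp [hDdef, h]
      have : 1 ≤ X ω / q ^ l := Nat.one_le_iff_ne_zero.mpr hdiv
      have := (Nat.one_le_div_iff (Nat.pow_pos (n := l) hq0)).mp this
      simpa using this
    have h1 : pS = (μ (D ⁻¹' ↑S)).toReal := by
      rw [hpSdef, hpdef, ← ENNReal.toReal_sum (fun a _ => measure_ne_top μ _),
        sum_measure_preimage_singleton _ (fun y _ => hmeas y)]
    have h2 : (μ (D ⁻¹' ↑S)).toReal ≤ (μ {ω | q ^ l ≤ X ω}).toReal :=
      ENNReal.toReal_mono (measure_ne_top μ _) (measure_mono hsub)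
    have h3 : (μ {ω | q ^ l ≤ X ω}).toReal ≤ A * ((q ^ l : ℕ) : ℝ) ^ (-ε) :=
      htail _ (Nat.one_le_pow _ _ hq0)
    have h4 : A * ((q ^ l : ℕ) : ℝ) ^ (-ε) = u := by
      rw [hudef]
      congr 1
      push_cast
      rw [← Real.rpow_natCast (q:ℝ) l, ← Real.rpow_mul hq0R.le]
      ring_nf
    rw [h1] at *
    linarith [h2, h3, h4 ▸ h3]
  -- rewrite the goal in terms of p
  have hsets : ∀ x : ℕ, (μ {ω | X ω / q ^ l % q = x}).toReal = p x := fun x => rfl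
  simp only [hsets]
  -- main entropy bound for the un-normalized entropy
  have hqm1 : (2 : ℝ) ≤ (q : ℝ) - 1 := by
    have : (3 : ℝ) ≤ q := by exact_mod_cast hq3
    linarith
  have hv0 : 0 < u / ((q : ℝ) - 1) := by positivity
  have hsumS : ∑ x ∈ S, -(p x * Real.log (p x)) ≤ u - pS - pS * Real.log (u / ((q:ℝ) - 1)) := by
    calc ∑ x ∈ S, -(p x * Real.log (p x))
        ≤ ∑ x ∈ S, (u / ((q:ℝ) - 1) - p x - p x * Real.log (u / ((q:ℝ) - 1))) :=
          Finset.sum_le_sum fun x _ => gibbs_term (hp0 x) hv0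
      _ = (S.card : ℝ) * (u / ((q:ℝ) - 1)) - pS - pS * Real.log (u / ((q:ℝ) - 1)) := by
          rw [Finset.sum_sub_distrib, Finset.sum_sub_distrib, Finset.sum_const,
            nsmul_eq_mul, ← Finset.sum_mul, ← hpSdef]
      _ = u - pS - pS * Real.log (u / ((q:ℝ) - 1)) := by
          rw [hcardS]
          field_simp
  have hterm0 : -(p 0 * Real.log (p 0)) ≤ pS := by
    have := gibbs_term (hp0 0) one_pos
    rw [Real.log_one, mul_zero] at this
    linarith
  have hlogsplit : Real.log (u / ((q:ℝ) - 1)) = Real.log u - Real.log ((q:ℝ) - 1) :=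
    Real.log_div hu0.ne' (by linarith)
  have hlogu : -Real.log u ≤ (l : ℝ) * ε * Real.log q + C := by
    rw [hudef, Real.log_mul hA.ne' (Real.rpow_pos_of_pos hq0R _).ne',
      Real.log_rpow hq0R]
    have : -((-(l:ℝ) * ε) * Real.log q) = (l:ℝ) * ε * Real.log q := by ring
    linarith [hClog]
  have hlogu0 : 0 ≤ -Real.log u := by
    have : Real.log u ≤ Real.log (1/2) := Real.log_le_log hu0 hu_half
    have h2 : Real.log (1/2 : ℝ) < 0 := Real.log_neg (by norm_num) (by norm_num)
    linarith
  have hD1 : pS * Real.log ((q:ℝ) - 1) ≤ u * Real.log q := by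
    apply mul_le_mul hpSu (Real.log_le_log (by linarith) (by linarith))
      (Real.log_nonneg (by linarith)) hu0.le
  have hE1 : pS * (-Real.log u) ≤ u * ((l : ℝ) * ε * Real.log q + C) := by
    calc pS * (-Real.log u) ≤ u * (-Real.log u) :=
          mul_le_mul_of_nonneg_right hpSu hlogu0
      _ ≤ u * ((l : ℝ) * ε * Real.log q + C) :=
          mul_le_mul_of_nonneg_left hlogu hu0.le
  have hH : -(∑ x ∈ Finset.range q, p x * Real.log (p x))
      ≤ u + u * Real.log q + u * ((l : ℝ) * ε * Real.log q + C) := by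
    have hsplitsum : ∑ x ∈ Finset.range q, p x * Real.log (p x)
        = (∑ x ∈ S, p x * Real.log (p x)) + p 0 * Real.log (p 0) :=
      (Finset.sum_erase_add _ _ h0mem).symm
    rw [hsplitsum, neg_add]
    have : -∑ x ∈ S, p x * Real.log (p x) = ∑ x ∈ S, -(p x * Real.log (p x)) := by
      rw [Finset.sum_neg_distrib]
    rw [this]
    have := hsumS
    rw [hlogsplit] at this
    nlinarith [hterm0, hD1, hE1]
  -- convert logb to log and finish
  have hlogb : ∀ x : ℕ, Real.logb q (p x) = Real.log (p x) / Real.log q := fun x => rfl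
  simp only [hlogb, div_eq_mul_inv]
  have hfin : -(∑ x ∈ Finset.range q, p x * Real.log (p x))
      ≤ A * (3 + ε + C) * (l : ℝ) * (q : ℝ) ^ (-(l : ℝ) * ε) * Real.log q := by
    have hRHS : A * (3 + ε + C) * (l : ℝ) * (q : ℝ) ^ (-(l : ℝ) * ε) * Real.log q
        = (3 + ε + C) * ((l : ℝ) * (u * Real.log q)) := by
      rw [hudef]; ring
    rw [hRHS]
    have hlL : 1 ≤ (l : ℝ) * Real.log q := one_le_mul_of_one_le_of_one_le hl1R hlogq
    have hK : 0 ≤ (l : ℝ) * (u * Real.log q) := by positivity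
    have h1 : u ≤ (l : ℝ) * (u * Real.log q) := by
      calc u = u * 1 := (mul_one u).symm
        _ ≤ u * ((l : ℝ) * Real.log q) := mul_le_mul_of_nonneg_left hlL hu0.le
        _ = (l : ℝ) * (u * Real.log q) := by ring
    have h2 : u * Real.log q ≤ (l : ℝ) * (u * Real.log q) := by
      have : (1 : ℝ) * (u * Real.log q) ≤ (l : ℝ) * (u * Real.log q) :=
        mul_le_mul_of_nonneg_right hl1R (by positivity)
      linarith
    have h4 : u * C ≤ C * ((l : ℝ) * (u * Real.log q)) := by
      calc u * C = C * (u * 1) := by ring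
        _ ≤ C * (u * ((l : ℝ) * Real.log q)) :=
            mul_le_mul_of_nonneg_left (mul_le_mul_of_nonneg_left hlL hu0.le) hC0
        _ = C * ((l : ℝ) * (u * Real.log q)) := by ring
    linarith [hH, h1, h2, h4, hK]
  calc -(∑ x ∈ Finset.range q, p x * (Real.log (p x) * (Real.log q)⁻¹))
      = -(∑ x ∈ Finset.range q, p x * Real.log (p x)) * (Real.log q)⁻¹ := by
        rw [show (∑ x ∈ Finset.range q, p x * (Real.log (p x) * (Real.log (q:ℝ))⁻¹))
            = ∑ x ∈ Finset.range q, (p x * Real.log (p x)) * (Real.log (q:ℝ))⁻¹ from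
          Finset.sum_congr rfl (fun x _ => by ring), ← Finset.sum_mul, neg_mul]
    _ ≤ A * (3 + ε + C) * (l : ℝ) * (q : ℝ) ^ (-(l : ℝ) * ε) := by
        rw [← div_eq_mul_inv, div_le_iff₀ hlogq0]
        exact hfin
end

section
/- If X is a nonnegative integer random variable with P(X ≥ x) ≤ A·x^(−ε), then for all sufficiently large q, |H_2(X) − Σ_{l≥0} h_l·log_2 q| ≤ C·q^(−ε)·(log_2 q)^2 for a constant C depending only on A and ε. -/
open Real


lemma my_log_le_mul_exp_neg_one {y : ℝ} (hy : 0 < y) : Real.log y ≤ y * Real.exp (-1) := by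
  have h := Real.log_le_sub_one_of_pos (show 0 < y * Real.exp (-1) by positivity)
  rw [Real.log_mul (ne_of_gt hy) (by positivity), Real.log_exp] at h
  linarith

lemma my_negMulLog_le_inv_e {x : ℝ} (hx : 0 ≤ x) : Real.negMulLog x ≤ Real.exp (-1) := by
  rcases eq_or_lt_of_le hx with h | h
  · simp [← h]; positivity
  · have h1 : Real.negMulLog x = x * Real.log x⁻¹ := by
      rw [Real.log_inv, Real.negMulLog]; ring
    have := my_log_le_mul_exp_neg_one (y := x⁻¹) (by positivity)
    rw [h1]
    calc x * Real.log x⁻¹ ≤ x * (x⁻¹ * Real.exp (-1)) := mul_le_mul_of_nonneg_left this hx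
      _ = Real.exp (-1) := by field_simp

lemma my_negMulLog_le_one_sub {x : ℝ} (hx : 0 ≤ x) : Real.negMulLog x ≤ 1 - x := by
  rcases eq_or_lt_of_le hx with h | h
  · simp [← h]
  · have h1 : Real.negMulLog x = x * Real.log x⁻¹ := by
      rw [Real.log_inv, Real.negMulLog]; ring
    have := Real.log_le_sub_one_of_pos (show 0 < x⁻¹ by positivity)
    rw [h1]
    calc x * Real.log x⁻¹ ≤ x * (x⁻¹ - 1) := mul_le_mul_of_nonneg_left this hx
      _ = 1 - x := by field_simp

lemma my_negMulLog_mono {a b : ℝ} (ha : 0 ≤ a) (hab : a ≤ b) (hb : b ≤ Real.exp (-1)) :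
    Real.negMulLog a ≤ Real.negMulLog b := by
  rcases eq_or_lt_of_le ha with h | h
  · rw [← h, Real.negMulLog_zero]
    refine Real.negMulLog_nonneg (le_trans ha hab) (hb.trans ?_)
    rw [show (1:ℝ) = Real.exp 0 by simp]
    exact (Real.exp_le_exp.mpr (by norm_num)).trans (le_of_eq rfl)
  · have hb0 : 0 < b := lt_of_lt_of_le h hab
    have hlb : 1 ≤ Real.log b⁻¹ := by
      rw [Real.log_inv, le_neg, ← Real.log_exp (-1)]
      exact Real.log_le_log (by positivity) hb
    have e1 : Real.negMulLog a = a * Real.log a⁻¹ := by rw [Real.log_inv, Real.negMulLog]; ring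
    have e2 : Real.negMulLog b = b * Real.log b⁻¹ := by rw [Real.log_inv, Real.negMulLog]; ring
    rw [e1, e2]
    have key : a * Real.log a⁻¹ = a * Real.log b⁻¹ + a * Real.log (b / a) := by
      rw [← mul_add, ← Real.log_mul (by positivity) (by positivity)]
      congr 2
      field_simp
    rw [key]
    have h2 : a * Real.log (b / a) ≤ b - a := by
      calc a * Real.log (b / a) ≤ a * (b / a - 1) :=
            mul_le_mul_of_nonneg_left (Real.log_le_sub_one_of_pos (by positivity)) ha
        _ = b - a := by field_simp
    have h3 : b - a ≤ (b - a) * Real.log b⁻¹ := le_mul_of_one_le_right (by linarith) hlb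
    nlinarith

lemma my_gibbs (s : Finset ℕ) (p r : ℕ → ℝ) (hp : ∀ n ∈ s, 0 ≤ p n)
    (hr : ∀ n ∈ s, 0 ≤ r n) (hpr : ∀ n ∈ s, p n ≠ 0 → r n ≠ 0)
    (hQ : ∑ n ∈ s, r n ≤ 1) :
    ∑ n ∈ s, Real.negMulLog (p n) ≤ (∑ n ∈ s, p n * Real.log (r n)⁻¹)
      + Real.negMulLog (∑ n ∈ s, p n) := by
  classical
  set s' := s.filter (fun n => p n ≠ 0) with hs'
  have hsub : s' ⊆ s := Finset.filter_subset _ _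
  have hppos : ∀ n ∈ s', 0 < p n := by
    intro n hn
    rw [hs', Finset.mem_filter] at hn
    exact lt_of_le_of_ne (hp n hn.1) (Ne.symm hn.2)
  have hrpos : ∀ n ∈ s', 0 < r n := by
    intro n hn
    rw [hs', Finset.mem_filter] at hn
    exact lt_of_le_of_ne (hr n hn.1) (Ne.symm (hpr n hn.1 hn.2))
  have e1 : ∑ n ∈ s, Real.negMulLog (p n) = ∑ n ∈ s', Real.negMulLog (p n) := by
    rw [hs']
    refine (Finset.sum_filter_of_ne ?_).symm
    intro n _ h hpn; apply h; rw [hpn, Real.negMulLog_zero]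
  have e2 : ∑ n ∈ s, p n * Real.log (r n)⁻¹ = ∑ n ∈ s', p n * Real.log (r n)⁻¹ := by
    rw [hs']
    refine (Finset.sum_filter_of_ne ?_).symm
    intro n _ h hpn; apply h; rw [hpn, zero_mul]
  have e3 : ∑ n ∈ s, p n = ∑ n ∈ s', p n := by
    rw [hs']
    refine (Finset.sum_filter_of_ne ?_).symm
    intro n _ h hpn; apply h; rw [hpn]
  set m := ∑ n ∈ s', p n with hm
  rw [e1, e2, e3]
  rcases Finset.eq_empty_or_nonempty s' with h | hne
  · have hm0 : m = 0 := by rw [hm, h, Finset.sum_empty]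
    rw [h, hm0]
    simp
  have hmpos : 0 < m := Finset.sum_pos hppos hne
  set Q := ∑ n ∈ s', r n with hQ'
  have hQpos : 0 < Q := Finset.sum_pos hrpos hne
  have hQ1 : Q ≤ 1 := le_trans (Finset.sum_le_sum_of_subset_of_nonneg hsub
    (fun n hn _ => hr n hn)) hQ
  have key : m * Real.log (m / Q) ≤ ∑ n ∈ s', p n * Real.log (p n / r n) := by
    have hterm : ∀ n ∈ s', p n * Real.log (r n / p n) ≤
        (r n * m / Q - p n) + p n * Real.log (Q / m) := by
      intro n hn
      have hp' := hppos n hn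
      have hr' := hrpos n hn
      have hsplit : Real.log (r n / p n) = Real.log (r n * m / (p n * Q)) + Real.log (Q / m) := by
        rw [← Real.log_mul (by positivity) (by positivity)]
        congr 1
        field_simp
      rw [hsplit, mul_add]
      have h1 := Real.log_le_sub_one_of_pos (show 0 < r n * m / (p n * Q) by positivity)
      have h2 : p n * Real.log (r n * m / (p n * Q)) ≤ p n * (r n * m / (p n * Q) - 1) :=
        mul_le_mul_of_nonneg_left h1 (le_of_lt hp')
      have h3 : p n * (r n * m / (p n * Q) - 1) = r n * m / Q - p n := by
        field_simp
      linarith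
    have hsum := Finset.sum_le_sum hterm
    have hsum2 : ∑ n ∈ s', ((r n * m / Q - p n) + p n * Real.log (Q / m))
        = (∑ n ∈ s', r n) * m / Q - m + m * Real.log (Q / m) := by
      rw [Finset.sum_add_distrib, Finset.sum_sub_distrib, ← Finset.sum_mul, ← hm]
      rw [← Finset.sum_div, ← Finset.sum_mul]
    rw [hsum2, ← hQ'] at hsum
    have hQQ : Q * m / Q = m := by field_simp
    rw [hQQ] at hsum
    have hlogflip : ∀ n ∈ s', p n * Real.log (p n / r n) = -(p n * Real.log (r n / p n)) := by
      intro n hn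
      rw [Real.log_div (ne_of_gt (hppos n hn)) (ne_of_gt (hrpos n hn)),
        Real.log_div (ne_of_gt (hrpos n hn)) (ne_of_gt (hppos n hn))]
      ring
    rw [Finset.sum_congr rfl hlogflip]
    have hlogQm : Real.log (Q / m) = - Real.log (m / Q) := by
      rw [Real.log_div (ne_of_gt hQpos) (ne_of_gt hmpos),
        Real.log_div (ne_of_gt hmpos) (ne_of_gt hQpos)]
      ring
    rw [hlogQm] at hsum
    rw [Finset.sum_neg_distrib]
    linarith
  have e4 : ∀ n ∈ s', Real.negMulLog (p n)
      = p n * Real.log (r n)⁻¹ - p n * Real.log (p n / r n) := by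
    intro n hn
    have hp' := hppos n hn
    have hr' := hrpos n hn
    simp only [Real.negMulLog, Real.log_div (ne_of_gt hp') (ne_of_gt hr'), Real.log_inv]
    ring
  rw [Finset.sum_congr rfl e4, Finset.sum_sub_distrib]
  have last : m * Real.log m ≤ m * Real.log (m / Q) := by
    apply mul_le_mul_of_nonneg_left _ (le_of_lt hmpos)
    apply Real.log_le_log hmpos
    rw [le_div_iff₀ hQpos]
    nlinarith
  have e5 : Real.negMulLog m = -(m * Real.log m) := by rw [Real.negMulLog]; ring
  rw [e5]
  linarith

lemma my_digit_sum_prod (q : ℕ) (hq : 0 < q) (f : ℕ → ℕ → ℝ) :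
    ∀ L : ℕ, ∑ n ∈ Finset.range (q ^ L), ∏ l ∈ Finset.range L, f l (n / q ^ l % q)
      = ∏ l ∈ Finset.range L, ∑ x ∈ Finset.range q, f l x := by
  intro L
  induction L with
  | zero => simp
  | succ L ih =>
    rw [Finset.prod_range_succ, ← ih]
    have key : ∑ n ∈ Finset.range (q ^ (L + 1)), ∏ l ∈ Finset.range (L + 1), f l (n / q ^ l % q)
        = ∑ z ∈ Finset.range (q ^ L) ×ˢ Finset.range q,
            (∏ l ∈ Finset.range L, f l (z.1 / q ^ l % q)) * f L z.2 := by
      apply Finset.sum_nbij' (i := fun n => (n % q ^ L, n / q ^ L))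
        (j := fun z => z.1 + q ^ L * z.2)
      · intro n hn
        simp only [Finset.mem_range, Finset.mem_product] at *
        refine ⟨Nat.mod_lt _ (pow_pos hq L), ?_⟩
        rw [Nat.div_lt_iff_lt_mul (pow_pos hq L)]
        calc n < q ^ (L + 1) := hn
          _ = q * q ^ L := by ring
      · intro z hz
        simp only [Finset.mem_range, Finset.mem_product] at *
        have e1 : q ^ L * (z.2 + 1) = q ^ L * z.2 + q ^ L := Nat.mul_succ _ _
        have e2 : q ^ L * (z.2 + 1) ≤ q ^ L * q := Nat.mul_le_mul_left _ hz.2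
        have e3 : q ^ (L + 1) = q ^ L * q := pow_succ q L
        omega
      · intro n _
        show n % q ^ L + q ^ L * (n / q ^ L) = n
        exact Nat.mod_add_div n (q ^ L)
      · intro z hz
        simp only [Finset.mem_range, Finset.mem_product] at hz
        have h1 : (z.1 + q ^ L * z.2) % q ^ L = z.1 := by
          rw [Nat.add_mul_mod_self_left, Nat.mod_eq_of_lt hz.1]
        have h2 : (z.1 + q ^ L * z.2) / q ^ L = z.2 := by
          rw [Nat.add_mul_div_left _ _ (pow_pos hq L), Nat.div_eq_of_lt hz.1, Nat.zero_add]
        simp [h1, h2]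
      · intro n hn
        simp only [Finset.mem_range] at hn
        rw [Finset.prod_range_succ]
        have hdec : n = n % q ^ L + q ^ L * (n / q ^ L) := by
          have := Nat.mod_add_div n (q ^ L); omega
        congr 1
        · apply Finset.prod_congr rfl
          intro l hl
          simp only [Finset.mem_range] at hl
          have hLl : q ^ L * (n / q ^ L) = q ^ l * (q ^ (L - l) * (n / q ^ L)) := by
            rw [← mul_assoc, ← pow_add]
            congr 2
            omega
          have step1 : n / q ^ l = n % q ^ L / q ^ l + q ^ (L - l) * (n / q ^ L) := by
            conv_lhs => rw [hdec]
            rw [hLl, Nat.add_mul_div_left _ _ (pow_pos hq l)]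
          have hq' : q ^ (L - l) * (n / q ^ L) = q * (q ^ (L - l - 1) * (n / q ^ L)) := by
            rw [← mul_assoc, ← pow_succ']
            congr 2
            omega
          rw [step1, hq', Nat.add_mul_mod_self_left]
        · have ha : n / q ^ L < q := by
            rw [Nat.div_lt_iff_lt_mul (pow_pos hq L)]
            calc n < q ^ (L + 1) := hn
              _ = q * q ^ L := by ring
          rw [Nat.mod_eq_of_lt ha]
    rw [key, Finset.sum_product]
    simp_rw [← Finset.mul_sum]
    rw [← Finset.sum_mul]

lemma my_summable_ite (p : ℕ → ℝ) (hp : ∀ n, 0 ≤ p n) (hsum : Summable p)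
    (P : ℕ → Prop) [DecidablePred P] : Summable (fun n => if P n then p n else 0) := by
  refine Summable.of_nonneg_of_le (fun n => ?_) (fun n => ?_) hsum
  · by_cases h : P n <;> simp [h, hp n]
  · by_cases h : P n <;> simp [h, hp n]

lemma my_tsum_finsetSum_ite (p : ℕ → ℝ) (hp : ∀ n, 0 ≤ p n) (hsum : Summable p)
    (s : Finset ℕ) (d : ℕ → ℕ) :
    ∑ x ∈ s, ∑' n, (if d n = x then p n else 0) = ∑' n, if d n ∈ s then p n else 0 := by
  classical
  rw [← Summable.tsum_finsetSum (fun x _ => my_summable_ite p hp hsum (fun n => d n = x))]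
  apply tsum_congr
  intro n
  exact Finset.sum_ite_eq s (d n) (fun _ => p n)

lemma my_group_tsum (p : ℕ → ℝ) (hp : ∀ n, 0 ≤ p n) (hsum : Summable p)
    (q : ℕ) (hq : 0 < q) (l : ℕ) (c : ℕ → ℝ) :
    Summable (fun n => p n * c (n / q ^ l % q)) ∧
    ∑' n, p n * c (n / q ^ l % q)
      = ∑ x ∈ Finset.range q, (∑' n, if n / q ^ l % q = x then p n else 0) * c x := by
  classical
  have hrw : ∀ n, p n * c (n / q ^ l % q)
      = ∑ x ∈ Finset.range q, (if n / q ^ l % q = x then p n else 0) * c x := by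
    intro n
    have hmem : n / q ^ l % q ∈ Finset.range q := Finset.mem_range.mpr (Nat.mod_lt _ hq)
    rw [show (fun x => (if n / q ^ l % q = x then p n else 0) * c x)
        = fun x => (if n / q ^ l % q = x then p n * c x else 0) from ?_]
    · rw [Finset.sum_ite_eq (Finset.range q) (n / q ^ l % q) (fun x => p n * c x), if_pos hmem]
    · funext x
      by_cases h : n / q ^ l % q = x <;> simp [h]
  have hsx : ∀ x ∈ Finset.range q,
      Summable (fun n => (if n / q ^ l % q = x then p n else 0) * c x) :=
    fun x _ => (my_summable_ite p hp hsum (fun n => n / q ^ l % q = x)).mul_right (c x)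
  constructor
  · exact (summable_sum hsx).congr (fun n => (hrw n).symm)
  · rw [tsum_congr hrw, Summable.tsum_finsetSum hsx]
    exact Finset.sum_congr rfl (fun x _ => tsum_mul_right)


lemma my_negMulLog_eq (y : ℝ) : Real.negMulLog y = y * Real.log y⁻¹ := by
  rw [Real.log_inv, Real.negMulLog]; ring

set_option maxHeartbeats 2000000 in
/-- For a power-law tailed integer distribution `p`, for all sufficiently large `q`,
the binary entropy `H₂(X)` differs from `(Σ_l h_l)·log₂ q` (the sum of the base-`q` digit
entropies, in bits) by at most `C·q^(−ε)·(log₂ q)²`, with `C` and the threshold on `q`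
depending only on `A` and `ε`. -/
theorem entropy_digit_sum_approx (A ε : ℝ) (hA : 0 < A) (hε : 0 < ε) :
    ∃ C : ℝ, 0 < C ∧ ∃ q₀ : ℕ, ∀ p : ℕ → ℝ, (∀ n, 0 ≤ p n) → Summable p →
      (∑' n, p n) = 1 →
      (∀ x : ℕ, 1 ≤ x → (∑' n : ℕ, if x ≤ n then p n else 0) ≤ A * (x : ℝ) ^ (-ε)) →
      ∀ q : ℕ, q₀ ≤ q →
      |(∑' n : ℕ, -(p n * Real.logb 2 (p n)))
          - (∑' l : ℕ, -(∑ x ∈ Finset.range q,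
              (∑' n : ℕ, if n / q ^ l % q = x then p n else 0) *
                Real.logb q (∑' n : ℕ, if n / q ^ l % q = x then p n else 0)))
            * Real.logb 2 q|
        ≤ C * (q : ℝ) ^ (-ε) * (Real.logb 2 q) ^ 2 := by
  classical
  set K : ℝ := 2 + 2 * |Real.log A| + 2 * ε with hKdef
  have hKpos : 0 < K := by positivity
  have hbpos : 0 < min (1/2 : ℝ) (Real.exp (-1) / A) := by positivity
  have htend : Filter.Tendsto (fun q : ℕ => (q : ℝ) ^ (-ε)) Filter.atTop (nhds 0) :=
    (tendsto_rpow_neg_atTop hε).comp tendsto_natCast_atTop_atTop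
  obtain ⟨N, hN⟩ := Filter.eventually_atTop.mp (htend.eventually (eventually_le_nhds hbpos))
  refine ⟨4 * A * K, by positivity, max N 3, ?_⟩
  intro p hp hsum hsum1 htail q hqge
  have hq3 : 3 ≤ q := le_trans (le_max_right N 3) hqge
  have hq0 : 0 < q := by omega
  have hq1 : 1 < q := by omega
  have hqR : (3:ℝ) ≤ (q:ℝ) := by exact_mod_cast hq3
  have hqRpos : (0:ℝ) < (q:ℝ) := by linarith
  have hrmin := hN q (le_trans (le_max_left N 3) hqge)
  set r : ℝ := (q:ℝ) ^ (-ε) with hrdef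
  have hrpos : 0 < r := Real.rpow_pos_of_pos hqRpos _
  have hr0 : 0 ≤ r := le_of_lt hrpos
  have hr2 : r ≤ 1/2 := le_trans hrmin (min_le_left _ _)
  have hrA : A * r ≤ Real.exp (-1) := by
    have h := le_trans hrmin (min_le_right _ _)
    calc A * r ≤ A * (Real.exp (-1)/A) := by nlinarith
      _ = Real.exp (-1) := by field_simp
  have hlogq : 1 ≤ Real.log q := by
    rw [Real.le_log_iff_exp_le hqRpos]
    exact le_trans (le_of_lt (lt_trans Real.exp_one_lt_d9 (by norm_num))) hqR
  have hlogqpos : 0 < Real.log q := by linarith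
  have hlog2pos : 0 < Real.log 2 := Real.log_pos (by norm_num)
  have hlog2le : Real.log 2 ≤ 1 := by
    have := Real.log_le_sub_one_of_pos (show (0:ℝ) < 2 by norm_num); linarith
  -- digit marginals
  obtain ⟨Pd, hPd⟩ : ∃ Pd : ℕ → ℕ → ℝ,
      ∀ l x, Pd l x = ∑' n, if n / q ^ l % q = x then p n else 0 :=
    ⟨fun l x => ∑' n, if n / q ^ l % q = x then p n else 0, fun _ _ => rfl⟩
  obtain ⟨Hl, hHl⟩ : ∃ Hl : ℕ → ℝ,
      ∀ l, Hl l = ∑ x ∈ Finset.range q, Real.negMulLog (Pd l x) :=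
    ⟨fun l => ∑ x ∈ Finset.range q, Real.negMulLog (Pd l x), fun _ => rfl⟩
  have h_ite_summ : ∀ l x : ℕ, Summable (fun n => if n / q ^ l % q = x then p n else 0) :=
    fun l x => my_summable_ite p hp hsum _
  have hPdnn : ∀ l x, 0 ≤ Pd l x := by
    intro l x
    rw [hPd]
    exact tsum_nonneg (fun n => by by_cases h : n / q ^ l % q = x <;> simp [h, hp n])
  have hPdsum1 : ∀ l, ∑ x ∈ Finset.range q, Pd l x = 1 := by
    intro l
    rw [Finset.sum_congr rfl (fun x _ => hPd l x),
      my_tsum_finsetSum_ite p hp hsum (Finset.range q) (fun n => n / q ^ l % q), ← hsum1]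
    exact tsum_congr (fun n => if_pos (Finset.mem_range.mpr (Nat.mod_lt _ hq0)))
  have hPdle1 : ∀ l x, Pd l x ≤ 1 := by
    intro l x
    rw [hPd, ← hsum1]
    refine Summable.tsum_le_tsum (fun n => ?_) (h_ite_summ l x) hsum
    by_cases h : n / q ^ l % q = x <;> simp [h, hp n]
  have hple : ∀ l n, p n ≤ Pd l (n / q ^ l % q) := by
    intro l n
    rw [hPd]
    have := Summable.le_tsum (h_ite_summ l (n / q ^ l % q)) n
      (fun j _ => by by_cases h : j / q ^ l % q = n / q ^ l % q <;> simp [h, hp j])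
    simpa using this
  have hp1 : ∀ n, p n ≤ 1 := by
    intro n
    rw [← hsum1]
    exact Summable.le_tsum hsum n (fun j _ => hp j)
  have hnml : ∀ n, 0 ≤ Real.negMulLog (p n) := fun n => Real.negMulLog_nonneg (hp n) (hp1 n)
  have hHlnn : ∀ l, 0 ≤ Hl l := by
    intro l
    rw [hHl]
    exact Finset.sum_nonneg (fun x _ => Real.negMulLog_nonneg (hPdnn l x) (hPdle1 l x))
  -- split of range q
  have hrange : Finset.range q = insert 0 (Finset.Ico 1 q) := by
    ext y
    simp only [Finset.mem_range, Finset.mem_insert, Finset.mem_Ico]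
    omega
  have h0notin : (0:ℕ) ∉ Finset.Ico 1 q := by simp
  obtain ⟨t, htdef⟩ : ∃ t : ℕ → ℝ, ∀ l, t l = ∑ x ∈ Finset.Ico 1 q, Pd l x :=
    ⟨_, fun _ => rfl⟩
  have hsplitq : ∀ l, Pd l 0 + t l = 1 := by
    intro l
    rw [htdef, ← Finset.sum_insert h0notin, ← hrange, hPdsum1]
  have htnn : ∀ l, 0 ≤ t l := by
    intro l
    rw [htdef]
    exact Finset.sum_nonneg (fun x _ => hPdnn l x)
  have ht1 : ∀ l, t l ≤ 1 := by
    intro l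
    have := hsplitq l
    have := hPdnn l 0
    linarith
  -- cast fact
  have hcastpow : ∀ l : ℕ, ((q ^ l : ℕ) : ℝ) ^ (-ε) = r ^ l := by
    intro l
    rw [hrdef]
    push_cast
    rw [← Real.rpow_natCast (q:ℝ) l, ← Real.rpow_natCast ((q:ℝ) ^ (-ε)) l,
      ← Real.rpow_mul (le_of_lt hqRpos), ← Real.rpow_mul (le_of_lt hqRpos), mul_comm]
  -- tail bound on t l
  have htle : ∀ l, 1 ≤ l → t l ≤ A * r ^ l := by
    intro l hl
    have h1 : t l = ∑' n, if n / q ^ l % q ∈ Finset.Ico 1 q then p n else 0 := by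
      rw [htdef, Finset.sum_congr rfl (fun x _ => hPd l x)]
      exact my_tsum_finsetSum_ite p hp hsum (Finset.Ico 1 q) (fun n => n / q ^ l % q)
    have h2 : t l ≤ ∑' n, if q ^ l ≤ n then p n else 0 := by
      rw [h1]
      refine Summable.tsum_le_tsum (fun n => ?_) (my_summable_ite p hp hsum _) (my_summable_ite p hp hsum _)
      by_cases h : n / q ^ l % q ∈ Finset.Ico 1 q
      · rw [if_pos h]
        simp only [Finset.mem_Ico] at h
        have hd : 1 ≤ n / q ^ l := le_trans h.1 (Nat.mod_le _ _)
        have : q ^ l ≤ n := (Nat.one_le_div_iff (pow_pos hq0 l)).mp hd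
        rw [if_pos this]
      · rw [if_neg h]
        by_cases h' : q ^ l ≤ n <;> simp [h', hp n]
    have h3 := htail (q ^ l) (Nat.one_le_iff_ne_zero.mpr (pow_ne_zero l (by omega)))
    calc t l ≤ A * ((q ^ l : ℕ) : ℝ) ^ (-ε) := le_trans h2 h3
      _ = A * r ^ l := by rw [hcastpow l]
  -- entropy bound per level l ≥ 1
  have hHlb : ∀ l, 1 ≤ l → Hl l ≤ A * K * Real.log q * (l * r ^ l) := by
    intro l hl
    have hlR : (1:ℝ) ≤ (l:ℝ) := by exact_mod_cast hl
    have hrl_le_r : r ^ l ≤ r := by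
      calc r ^ l ≤ r ^ 1 := pow_le_pow_of_le_one hr0 (by linarith) hl
        _ = r := pow_one r
    have hτpos : 0 < A * r ^ l := by positivity
    have hτe : A * r ^ l ≤ Real.exp (-1) := le_trans (by nlinarith) hrA
    have hsplit_H : Hl l
        = Real.negMulLog (Pd l 0) + ∑ x ∈ Finset.Ico 1 q, Real.negMulLog (Pd l x) := by
      rw [hHl, hrange, Finset.sum_insert h0notin]
    have hpart1 : Real.negMulLog (Pd l 0) ≤ t l := by
      have h1 := my_negMulLog_le_one_sub (hPdnn l 0)
      have h2 := hsplitq l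
      linarith
    have hpart2 : ∑ x ∈ Finset.Ico 1 q, Real.negMulLog (Pd l x)
        ≤ t l * Real.log q + 2 * Real.negMulLog (t l) := by
      rcases eq_or_lt_of_le (htnn l) with h0 | h0
      · have hz : ∀ x ∈ Finset.Ico 1 q, Pd l x = 0 := by
          intro x hx
          have h1 : Pd l x ≤ t l := by
            rw [htdef]
            exact Finset.single_le_sum (fun y _ => hPdnn l y) hx
          have h2 := hPdnn l x
          linarith [h0]
        rw [Finset.sum_congr rfl (fun x hx => by rw [hz x hx, Real.negMulLog_zero])]
        rw [← h0]
        simp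
      · have hcard : ((Finset.Ico 1 q).card : ℝ) = (q:ℝ) - 1 := by
          rw [Nat.card_Ico, Nat.cast_sub (by omega)]
          norm_num
        have hqm1 : (1:ℝ) ≤ (q:ℝ) - 1 := by linarith
        have hQsum : ∑ _x ∈ Finset.Ico 1 q, (t l / ((q:ℝ) - 1)) = t l := by
          rw [Finset.sum_const, nsmul_eq_mul, hcard]
          field_simp
        have hgib := my_gibbs (Finset.Ico 1 q) (fun x => Pd l x)
          (fun _ => t l / ((q:ℝ) - 1))
          (fun x _ => hPdnn l x) (fun _ _ => by positivity)
          (fun x _ _ => ne_of_gt (by positivity))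
          (by rw [hQsum]; exact ht1 l)
        have hsum_t : ∑ x ∈ Finset.Ico 1 q, Pd l x = t l := (htdef l).symm
        rw [hsum_t] at hgib
        have hlogc : Real.log (t l / ((q:ℝ) - 1))⁻¹ = Real.log ((q:ℝ)-1) - Real.log (t l) := by
          rw [inv_div, Real.log_div (by linarith) (ne_of_gt h0)]
        have hmulc : ∑ x ∈ Finset.Ico 1 q, Pd l x * Real.log (t l / ((q:ℝ) - 1))⁻¹
            = t l * (Real.log ((q:ℝ)-1) - Real.log (t l)) := by
          rw [← Finset.sum_mul, hsum_t, hlogc]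
        rw [hmulc] at hgib
        have hlogq1 : Real.log ((q:ℝ)-1) ≤ Real.log q := Real.log_le_log (by linarith) (by linarith)
        have hnmlt : Real.negMulLog (t l) = -(t l * Real.log (t l)) := by
          rw [Real.negMulLog]; ring
        have : t l * (Real.log ((q:ℝ)-1) - Real.log (t l))
            ≤ t l * Real.log q + Real.negMulLog (t l) := by
          rw [hnmlt]
          have := mul_le_mul_of_nonneg_left hlogq1 (htnn l)
          nlinarith
        linarith
    have hmono := my_negMulLog_mono (htnn l) (htle l hl) hτe
    have hlogr : Real.log r = -ε * Real.log q := by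
      rw [hrdef, Real.log_rpow hqRpos]
    have hτlog : Real.negMulLog (A * r ^ l)
        = A * r ^ l * (-Real.log A + (l:ℝ) * (ε * Real.log q)) := by
      rw [Real.negMulLog, Real.log_mul (ne_of_gt hA) (pow_ne_zero _ (ne_of_gt hrpos)),
        Real.log_pow, hlogr]
      ring
    have hnm2 : Real.negMulLog (t l) ≤ A * r ^ l * (|Real.log A| + (l:ℝ) * (ε * Real.log q)) := by
      calc Real.negMulLog (t l) ≤ Real.negMulLog (A * r ^ l) := hmono
        _ = A * r ^ l * (-Real.log A + (l:ℝ) * (ε * Real.log q)) := hτlog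
        _ ≤ A * r ^ l * (|Real.log A| + (l:ℝ) * (ε * Real.log q)) := by
            refine mul_le_mul_of_nonneg_left ?_ (le_of_lt hτpos)
            have := neg_le_abs (Real.log A)
            linarith
    have h1 : t l ≤ A * r ^ l := htle l hl
    have hllq : 1 ≤ (l:ℝ) * Real.log q := by nlinarith
    have h2 : t l * Real.log q ≤ (A * r ^ l) * Real.log q :=
      mul_le_mul_of_nonneg_right h1 (by linarith)
    have hKgoal : A * r ^ l * (1 + Real.log q + 2 * (|Real.log A| + (l:ℝ) * (ε * Real.log q)))
        ≤ A * K * Real.log q * ((l:ℝ) * r ^ l) := by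
      have expand : A * K * Real.log q * ((l:ℝ) * r ^ l)
          = A * r ^ l * ((2 + 2 * |Real.log A| + 2 * ε) * ((l:ℝ) * Real.log q)) := by
        rw [hKdef]; ring
      rw [expand]
      refine mul_le_mul_of_nonneg_left ?_ (le_of_lt hτpos)
      have e2 : Real.log q ≤ (l:ℝ) * Real.log q := by nlinarith
      have e3 : 2 * |Real.log A| ≤ 2 * |Real.log A| * ((l:ℝ) * Real.log q) :=
        le_mul_of_one_le_right (by positivity) hllq
      nlinarith
    rw [hsplit_H]
    nlinarith [hpart1, hpart2, hnm2, h2, h1, hKgoal]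
  -- geometric series facts
  have hrabs : ‖r‖ < 1 := by rw [Real.norm_eq_abs, abs_of_nonneg hr0]; linarith
  have hgeo_sum : Summable (fun l : ℕ => (l:ℝ) * r ^ l) := by
    have := summable_pow_mul_geometric_of_norm_lt_one 1 hrabs
    exact this.congr (fun l => by rw [pow_one])
  have hgeo_val : ∑' l : ℕ, (l:ℝ) * r ^ l = r / (1 - r)^2 :=
    tsum_coe_mul_geometric_of_norm_lt_one hrabs
  have hshift_s : Summable (fun l : ℕ => ((l+1:ℕ):ℝ) * r ^ (l+1)) :=
    (summable_nat_add_iff 1).mpr hgeo_sum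
  have hHlsum : Summable Hl := by
    rw [← summable_nat_add_iff 1]
    refine Summable.of_nonneg_of_le (fun l => hHlnn (l+1)) (fun l => ?_)
      (hshift_s.mul_left (A * K * Real.log q))
    exact_mod_cast hHlb (l+1) (by omega)
  have hTb : ∑' l, Hl (l + 1) ≤ 4 * A * K * Real.log q * r := by
    have h1 : ∑' l : ℕ, Hl (l+1) ≤ ∑' l : ℕ, A * K * Real.log q * (((l+1:ℕ):ℝ) * r ^ (l+1)) := by
      refine Summable.tsum_le_tsum (fun l => ?_) ((summable_nat_add_iff 1).mpr hHlsum)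
        (hshift_s.mul_left _)
      exact_mod_cast hHlb (l+1) (by omega)
    have h2 : ∑' l : ℕ, A * K * Real.log q * (((l+1:ℕ):ℝ) * r ^ (l+1))
        = A * K * Real.log q * ∑' l : ℕ, ((l+1:ℕ):ℝ) * r ^ (l+1) := tsum_mul_left
    have h3 : ∑' l : ℕ, ((l+1:ℕ):ℝ) * r ^ (l+1) = r / (1-r)^2 := by
      rw [← hgeo_val, Summable.tsum_eq_zero_add hgeo_sum]
      simp
    have h4 : r / (1-r)^2 ≤ 4 * r := by
      have hsq : (1/4 : ℝ) ≤ (1-r)^2 := by nlinarith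
      rw [div_le_iff₀ (by nlinarith)]
      nlinarith
    have h5 : A * K * Real.log q * (r / (1-r)^2) ≤ 4 * A * K * Real.log q * r := by
      have hAK : 0 ≤ A * K * Real.log q := by positivity
      calc A * K * Real.log q * (r / (1-r)^2) ≤ A * K * Real.log q * (4 * r) :=
            mul_le_mul_of_nonneg_left h4 hAK
        _ = 4 * A * K * Real.log q * r := by ring
    calc ∑' l : ℕ, Hl (l+1) ≤ A * K * Real.log q * ∑' l : ℕ, ((l+1:ℕ):ℝ) * r ^ (l+1) := by
          rw [← h2]; exact h1
      _ = A * K * Real.log q * (r / (1-r)^2) := by rw [h3]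
      _ ≤ 4 * A * K * Real.log q * r := h5
  -- finite Gibbs bound
  have hfin : ∀ M : ℕ, ∑ n ∈ Finset.range M, Real.negMulLog (p n)
      ≤ (∑' l, Hl l) + Real.negMulLog (∑ n ∈ Finset.range M, p n) := by
    intro M
    have hMpow : M ≤ q ^ M := le_of_lt (Nat.lt_pow_self (n := M) hq1)
    have hRnn : ∀ n : ℕ, 0 ≤ ∏ l ∈ Finset.range M, Pd l (n / q ^ l % q) :=
      fun n => Finset.prod_nonneg (fun l _ => hPdnn l _)
    have hRne : ∀ n ∈ Finset.range M, p n ≠ 0 →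
        (∏ l ∈ Finset.range M, Pd l (n / q ^ l % q)) ≠ 0 := by
      intro n _ hpn
      have hpos : 0 < p n := lt_of_le_of_ne (hp n) (Ne.symm hpn)
      exact ne_of_gt (Finset.prod_pos fun l _ => lt_of_lt_of_le hpos (hple l n))
    have hRsum : ∑ n ∈ Finset.range M, ∏ l ∈ Finset.range M, Pd l (n / q ^ l % q) ≤ 1 := by
      calc ∑ n ∈ Finset.range M, ∏ l ∈ Finset.range M, Pd l (n / q ^ l % q)
          ≤ ∑ n ∈ Finset.range (q ^ M), ∏ l ∈ Finset.range M, Pd l (n / q ^ l % q) :=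
            Finset.sum_le_sum_of_subset_of_nonneg (Finset.range_subset_range.mpr hMpow)
              (fun n _ _ => hRnn n)
        _ = ∏ l ∈ Finset.range M, ∑ x ∈ Finset.range q, Pd l x :=
            my_digit_sum_prod q hq0 (fun l x => Pd l x) M
        _ = 1 := by rw [Finset.prod_congr rfl (fun l _ => hPdsum1 l), Finset.prod_const_one]
    have hgib := my_gibbs (Finset.range M) p
      (fun n => ∏ l ∈ Finset.range M, Pd l (n / q ^ l % q))
      (fun n _ => hp n) (fun n _ => hRnn n) hRne hRsum
    have hmid : ∑ n ∈ Finset.range M,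
        p n * Real.log (∏ l ∈ Finset.range M, Pd l (n / q ^ l % q))⁻¹ ≤ ∑' l, Hl l := by
      have hterm : ∀ n ∈ Finset.range M,
          p n * Real.log (∏ l ∈ Finset.range M, Pd l (n / q ^ l % q))⁻¹
          = ∑ l ∈ Finset.range M, p n * Real.log (Pd l (n / q ^ l % q))⁻¹ := by
        intro n _
        by_cases hpn : p n = 0
        · simp [hpn]
        · have hpos : 0 < p n := lt_of_le_of_ne (hp n) (Ne.symm hpn)
          have hfne : ∀ l ∈ Finset.range M, Pd l (n / q ^ l % q) ≠ 0 :=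
            fun l _ => ne_of_gt (lt_of_lt_of_le hpos (hple l n))
          rw [← Finset.mul_sum]
          congr 1
          simp only [Real.log_inv]
          rw [Real.log_prod hfne, ← Finset.sum_neg_distrib]
      rw [Finset.sum_congr rfl hterm, Finset.sum_comm]
      have hll : ∀ l ∈ Finset.range M,
          ∑ n ∈ Finset.range M, p n * Real.log (Pd l (n / q ^ l % q))⁻¹ ≤ Hl l := by
        intro l _
        have hcnn : ∀ n : ℕ, 0 ≤ p n * Real.log (Pd l (n / q ^ l % q))⁻¹ := by
          intro n
          refine mul_nonneg (hp n) ?_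
          rw [Real.log_inv]
          have := Real.log_nonpos (hPdnn l (n / q ^ l % q)) (hPdle1 l (n / q ^ l % q))
          linarith
        obtain ⟨hsummable, heq⟩ := my_group_tsum p hp hsum q hq0 l
          (fun x => Real.log (Pd l x)⁻¹)
        have heq2 : ∑' n, p n * Real.log (Pd l (n / q ^ l % q))⁻¹
            = ∑ x ∈ Finset.range q, Pd l x * Real.log (Pd l x)⁻¹ := by
          rw [heq]
          exact Finset.sum_congr rfl (fun x _ => by rw [← hPd l x])
        calc ∑ n ∈ Finset.range M, p n * Real.log (Pd l (n / q ^ l % q))⁻¹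
            ≤ ∑' n, p n * Real.log (Pd l (n / q ^ l % q))⁻¹ :=
              Summable.sum_le_tsum _ (fun n _ => hcnn n) hsummable
          _ = ∑ x ∈ Finset.range q, Pd l x * Real.log (Pd l x)⁻¹ := heq2
          _ = Hl l := by
              rw [hHl]
              exact Finset.sum_congr rfl (fun x _ => (my_negMulLog_eq (Pd l x)).symm)
      calc ∑ l ∈ Finset.range M, ∑ n ∈ Finset.range M, p n * Real.log (Pd l (n / q ^ l % q))⁻¹
          ≤ ∑ l ∈ Finset.range M, Hl l := Finset.sum_le_sum hll
        _ ≤ ∑' l, Hl l := Summable.sum_le_tsum _ (fun l _ => hHlnn l) hHlsum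
    exact le_trans hgib (add_le_add_left hmid _)
  -- summability of binary entropy
  have hSfin : Summable (fun n => Real.negMulLog (p n)) := by
    apply summable_of_sum_range_le hnml (c := (∑' l, Hl l) + Real.exp (-1))
    intro M
    refine le_trans (hfin M) (add_le_add_right ?_ _)
    exact my_negMulLog_le_inv_e (Finset.sum_nonneg (fun n _ => hp n))
  obtain ⟨S, hSdef⟩ : ∃ S : ℝ, S = ∑' n, Real.negMulLog (p n) := ⟨_, rfl⟩
  -- upper bound S ≤ T
  have hST : S ≤ ∑' l, Hl l := by
    have hps : Filter.Tendsto (fun M => ∑ n ∈ Finset.range M, p n) Filter.atTop (nhds 1) := by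
      have := hsum.hasSum.tendsto_sum_nat
      rwa [hsum1] at this
    have h1 : Filter.Tendsto (fun M => ∑ n ∈ Finset.range M, Real.negMulLog (p n))
        Filter.atTop (nhds S) := by
      rw [hSdef]
      exact hSfin.hasSum.tendsto_sum_nat
    have h2 : Filter.Tendsto
        (fun M => (∑' l, Hl l) + Real.negMulLog (∑ n ∈ Finset.range M, p n))
        Filter.atTop (nhds ((∑' l, Hl l) + 0)) := by
      refine Filter.Tendsto.add tendsto_const_nhds ?_
      have := (Real.continuous_negMulLog.tendsto 1).comp hps
      simpa [Function.comp_def] using this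
    have := le_of_tendsto_of_tendsto' h1 h2 hfin
    simpa using this
  -- lower bound Hl 0 ≤ S
  have hH0S : Hl 0 ≤ S := by
    have hle : ∀ x : ℕ, Real.negMulLog (Pd 0 x)
        ≤ ∑' n, if n / q ^ 0 % q = x then Real.negMulLog (p n) else 0 := by
      intro x
      by_cases hx : Pd 0 x = 0
      · rw [hx, Real.negMulLog_zero]
        exact tsum_nonneg (fun n => by split_ifs with h; exacts [hnml n, le_rfl])
      · have hxpos : 0 < Pd 0 x := lt_of_le_of_ne (hPdnn 0 x) (Ne.symm hx)
        have e : Real.negMulLog (Pd 0 x)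
            = ∑' n, (if n / q ^ 0 % q = x then p n else 0) * Real.log (Pd 0 x)⁻¹ := by
          rw [tsum_mul_right, ← hPd 0 x, my_negMulLog_eq]
        rw [e]
        refine Summable.tsum_le_tsum (fun n => ?_) ((h_ite_summ 0 x).mul_right _)
          (my_summable_ite (fun n => Real.negMulLog (p n)) hnml hSfin
            (fun n => n / q ^ 0 % q = x))
        by_cases h : n / q ^ 0 % q = x
        · rw [if_pos h, if_pos h]
          rcases eq_or_lt_of_le (hp n) with hpn | hpn
          · rw [← hpn]; simp
          · have hpP : p n ≤ Pd 0 x := h ▸ hple 0 n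
            have hlog : Real.log (Pd 0 x)⁻¹ ≤ Real.log (p n)⁻¹ := by
              apply Real.log_le_log (by positivity)
              exact inv_anti₀ hpn hpP
            rw [my_negMulLog_eq]
            exact mul_le_mul_of_nonneg_left hlog (hp n)
        · rw [if_neg h, if_neg h, zero_mul]
      
    have hgrp := my_tsum_finsetSum_ite (fun n => Real.negMulLog (p n)) hnml hSfin
      (Finset.range q) (fun n => n / q ^ 0 % q)
    have h2 : Hl 0 ≤ ∑ x ∈ Finset.range q,
        ∑' n, if n / q ^ 0 % q = x then Real.negMulLog (p n) else 0 := by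
      rw [hHl]
      exact Finset.sum_le_sum (fun x _ => hle x)
    rw [hgrp] at h2
    rw [hSdef]
    refine le_trans h2 (le_of_eq (tsum_congr (fun n => ?_)))
    exact if_pos (Finset.mem_range.mpr (Nat.mod_lt _ hq0))
  -- |S - T| bound
  have habs : |S - ∑' l, Hl l| ≤ 4 * A * K * Real.log q * r := by
    have h2 : (∑' l, Hl l) - Hl 0 = ∑' l, Hl (l+1) := by
      rw [Summable.tsum_eq_zero_add hHlsum]; ring
    rw [abs_sub_comm, abs_of_nonneg (by linarith)]
    calc (∑' l, Hl l) - S ≤ (∑' l, Hl l) - Hl 0 := by linarith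
      _ = ∑' l, Hl (l+1) := h2
      _ ≤ 4 * A * K * Real.log q * r := hTb
  -- rewrite the goal
  have eS : (∑' n : ℕ, -(p n * Real.logb 2 (p n))) = S / Real.log 2 := by
    rw [hSdef, ← tsum_div_const]
    refine tsum_congr (fun n => ?_)
    rw [Real.logb, Real.negMulLog]
    ring
  have eT : (∑' l : ℕ, -(∑ x ∈ Finset.range q,
      (∑' n : ℕ, if n / q ^ l % q = x then p n else 0) *
        Real.logb q (∑' n : ℕ, if n / q ^ l % q = x then p n else 0)))
      = (∑' l, Hl l) / Real.log q := by
    rw [← tsum_div_const]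
    refine tsum_congr (fun l => ?_)
    have : ∀ x, (∑' n : ℕ, if n / q ^ l % q = x then p n else 0) = Pd l x :=
      fun x => (hPd l x).symm
    simp only [this]
    rw [hHl, Finset.sum_div, ← Finset.sum_neg_distrib]
    refine Finset.sum_congr rfl (fun x _ => ?_)
    rw [Real.logb, Real.negMulLog]
    ring
  rw [eS, eT]
  have elogb : Real.logb 2 (q:ℝ) = Real.log q / Real.log 2 := by rw [Real.logb]
  have elogb1 : 1 ≤ Real.logb 2 (q:ℝ) := by
    rw [elogb, le_div_iff₀ hlog2pos]
    linarith
  have e3 : (∑' l, Hl l) / Real.log q * Real.logb 2 (q:ℝ) = (∑' l, Hl l) / Real.log 2 := by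
    rw [elogb]
    field_simp
  rw [e3, div_sub_div_same, abs_div, abs_of_pos hlog2pos]
  have hb1 : 0 ≤ Real.logb 2 (q:ℝ) - 1 := by linarith [elogb1]
  have h0 : (0:ℝ) ≤ 4 * A * K * r := by positivity
  calc |S - ∑' l, Hl l| / Real.log 2
      ≤ (4 * A * K * Real.log q * r) / Real.log 2 := by
        apply div_le_div_of_nonneg_right habs (le_of_lt hlog2pos)
    _ = 4 * A * K * r * (Real.log q / Real.log 2) := by ring
    _ = 4 * A * K * r * Real.logb 2 (q:ℝ) := by rw [← elogb]
    _ ≤ 4 * A * K * r * Real.logb 2 (q:ℝ) ^ 2 := by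
        have hx : 0 ≤ Real.logb 2 (q:ℝ) * (Real.logb 2 (q:ℝ) - 1) :=
          mul_nonneg (by linarith) hb1
        nlinarith [mul_nonneg h0 hx]
    _ = 4 * A * K * r * Real.logb 2 (q:ℝ) ^ 2 := by ring
end

section
/- Let p* be a probability distribution on {0,…,q−1} and define the typical set T_n(p*) ⊆ {0,…,q−1}^n to consist of vectors x whose empirical type θ_x satisfies D(θ_x || p*) ≤ n^(−γ), where 0 < γ < 1. Then for any β ∈ (1−γ/2, 1) there exists A = A(β,γ,q) such that |T_n(p*)| ≤ q^(n·H(p*) + A·n^β), where H(p*) is the q-ary entropy of p*. -/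
open Real

lemma log_lb {u : ℝ} (hu : 1 ≤ u) : 2 * (u - 1) / (u + 1) ≤ Real.log u := by
  have hder : ∀ v : ℝ, 0 < v →
      HasDerivAt (fun v : ℝ => Real.log v - 2 * (v - 1) / (v + 1))
        ((v - 1) ^ 2 / (v * (v + 1) ^ 2)) v := by
    intro v hv
    have hv1 : v + 1 ≠ 0 := by linarith
    have h1 : HasDerivAt Real.log v⁻¹ v := Real.hasDerivAt_log hv.ne'
    have h2 : HasDerivAt (fun v : ℝ => 2 * (v - 1) / (v + 1))
        ((2 * 1 * (v + 1) - 2 * (v - 1) * 1) / (v + 1) ^ 2) v := by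
      exact (((hasDerivAt_id v).sub_const 1).const_mul 2).div ((hasDerivAt_id v).add_const 1) hv1
    have := h1.sub h2
    refine this.congr_deriv ?_
    field_simp
    ring
  have hmono : MonotoneOn (fun v : ℝ => Real.log v - 2 * (v - 1) / (v + 1)) (Set.Ici 1) := by
    apply monotoneOn_of_deriv_nonneg (convex_Ici 1)
    · intro v hv
      have hv0 : (0:ℝ) < v := lt_of_lt_of_le one_pos hv
      exact ((hder v hv0).differentiableAt.continuousAt).continuousWithinAt
    · intro v hv
      rw [interior_Ici] at hv
      have hv0 : (0:ℝ) < v := lt_trans one_pos hv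
      exact ((hder v hv0).differentiableAt).differentiableWithinAt
    · intro v hv
      rw [interior_Ici] at hv
      have hv0 : (0:ℝ) < v := lt_trans one_pos hv
      rw [(hder v hv0).deriv]
      positivity
  have := hmono (Set.self_mem_Ici) (Set.mem_Ici.2 hu) hu
  simp only [Real.log_one] at this
  linarith

lemma log_ub {u : ℝ} (hu : 1 ≤ u) : Real.log u ≤ (u ^ 2 - 1) / (2 * u) := by
  have hder : ∀ v : ℝ, 0 < v →
      HasDerivAt (fun v : ℝ => (v ^ 2 - 1) / (2 * v) - Real.log v)
        ((v - 1) ^ 2 / (2 * v ^ 2)) v := by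
    intro v hv
    have h1 : HasDerivAt Real.log v⁻¹ v := Real.hasDerivAt_log hv.ne'
    have h2 : HasDerivAt (fun v : ℝ => (v ^ 2 - 1) / (2 * v))
        ((2 * v * (2 * v) - (v ^ 2 - 1) * 2) / (2 * v) ^ 2) v := by
      have hnum : HasDerivAt (fun v : ℝ => v ^ 2 - 1) (2 * v) v := by
        simpa using (hasDerivAt_pow 2 v).sub_const 1
      have hden : HasDerivAt (fun v : ℝ => 2 * v) 2 v := by
        simpa using (hasDerivAt_id v).const_mul 2
      exact hnum.div hden (by positivity)
    have := h2.sub h1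
    refine this.congr_deriv ?_
    field_simp
    ring
  have hmono : MonotoneOn (fun v : ℝ => (v ^ 2 - 1) / (2 * v) - Real.log v) (Set.Ici 1) := by
    apply monotoneOn_of_deriv_nonneg (convex_Ici 1)
    · intro v hv
      have hv0 : (0:ℝ) < v := lt_of_lt_of_le one_pos hv
      exact ((hder v hv0).differentiableAt.continuousAt).continuousWithinAt
    · intro v hv
      rw [interior_Ici] at hv
      have hv0 : (0:ℝ) < v := lt_trans one_pos hv
      exact ((hder v hv0).differentiableAt).differentiableWithinAt
    · intro v hv
      rw [interior_Ici] at hv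
      have hv0 : (0:ℝ) < v := lt_trans one_pos hv
      rw [(hder v hv0).deriv]
      positivity
  have := hmono (Set.self_mem_Ici) (Set.mem_Ici.2 hu) hu
  simp only [Real.log_one] at this
  norm_num at this
  linarith

lemma quad_bound {x y : ℝ} (hx0 : 0 ≤ x) (hx1 : x ≤ 1) (hy0 : 0 ≤ y) (hy1 : y ≤ 1)
    (hsupp : y = 0 → x = 0) : (x - y) ^ 2 / 2 ≤ x * Real.log (x / y) - x + y := by
  rcases eq_or_lt_of_le hy0 with hy | hy
  · have hx : x = 0 := hsupp hy.symm
    simp [hx, ← hy]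
  rcases eq_or_lt_of_le hx0 with hx | hx
  · simp only [← hx, zero_mul, zero_sub, zero_div, Real.log_zero, mul_zero]
    nlinarith
  rcases le_or_gt y x with hxy | hxy
  · -- x ≥ y
    have hu : 1 ≤ x / y := (one_le_div hy).2 hxy
    have hlog := log_lb hu
    have h2 : 2 * (x / y - 1) / (x / y + 1) = 2 * (x - y) / (x + y) := by
      rw [div_eq_div_iff (by positivity) (by positivity)]
      field_simp
    rw [h2] at hlog
    have h3 : x * (2 * (x - y) / (x + y)) - x + y = (x - y) ^ 2 / (x + y) := by
      field_simp
      ring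
    have h4 : (x - y) ^ 2 / 2 ≤ (x - y) ^ 2 / (x + y) := by
      apply div_le_div_of_nonneg_left (sq_nonneg _) (by linarith) (by linarith)
    have h5 : x * (2 * (x - y) / (x + y)) ≤ x * Real.log (x / y) :=
      mul_le_mul_of_nonneg_left hlog hx0
    linarith
  · -- x < y
    have hu : 1 ≤ y / x := (one_le_div hx).2 hxy.le
    have hlog := log_ub hu
    have hxyl : Real.log (x / y) = - Real.log (y / x) := by
      rw [← Real.log_inv, inv_div]
    have h5 : x * Real.log (x / y) ≥ x * (-(((y / x) ^ 2 - 1) / (2 * (y / x)))) := by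
      rw [hxyl]
      apply mul_le_mul_of_nonneg_left _ hx0
      linarith
    have h3 : x * (-(((y / x) ^ 2 - 1) / (2 * (y / x)))) - x + y = (y - x) ^ 2 / (2 * y) := by
      field_simp
      ring
    have h4 : (x - y) ^ 2 / 2 ≤ (y - x) ^ 2 / (2 * y) := by
      rw [show (x - y) ^ 2 = (y - x) ^ 2 by ring]
      apply div_le_div_of_nonneg_left (sq_nonneg _) (by linarith) (by linarith)
    linarith

-- |x log x - y log y| ≤ (1 + 2/(1-c)) |x-y|^c on [0,1]
lemma xlogx_holder {c x y : ℝ} (hc0 : 0 < c) (hc1 : c < 1)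
    (hx0 : 0 ≤ x) (hx1 : x ≤ 1) (hy0 : 0 ≤ y) (hy1 : y ≤ 1) :
    |x * Real.log x - y * Real.log y| ≤ (1 + 2 / (1 - c)) * |x - y| ^ c := by
  have hC : (0:ℝ) < 1 + 2 / (1 - c) := by
    have h1c : (0:ℝ) < 1 - c := by linarith
    positivity
  wlog hyx : y ≤ x with H
  · rw [abs_sub_comm (x * Real.log x), abs_sub_comm x]
    exact H hc0 hc1 hy0 hy1 hx0 hx1 hC (le_of_not_ge hyx)
  set d := x - y with hd
  have hd0 : 0 ≤ d := by simp [hd]; linarith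
  rcases eq_or_lt_of_le hd0 with hdz | hdz
  · have hxy : x = y := by simp [hd] at hdz; linarith
    simp [hxy, ← hdz, Real.zero_rpow hc0.ne']
  have hd1 : d ≤ 1 := by simp [hd]; linarith
  -- Step A : x log x - y log y ≤ d
  have stepA : x * Real.log x - y * Real.log y ≤ d := by
    rcases eq_or_lt_of_le hy0 with hy | hy
    · have : x * Real.log x ≤ 0 :=
        mul_nonpos_of_nonneg_of_nonpos hx0 (Real.log_nonpos hx0 hx1)
      simp [← hy]
      linarith
    · have hx : 0 < x := lt_of_lt_of_le hy hyx
      have e : x * Real.log x - y * Real.log y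
          = (x - y) * Real.log x + y * (Real.log x - Real.log y) := by ring
      have t1 : (x - y) * Real.log x ≤ 0 :=
        mul_nonpos_of_nonneg_of_nonpos (by linarith) (Real.log_nonpos hx0 hx1)
      have t2 : Real.log x - Real.log y ≤ d / y := by
        rw [← Real.log_div hx.ne' hy.ne']
        have := Real.log_le_sub_one_of_pos (show (0:ℝ) < x / y by positivity)
        have e2 : x / y - 1 = d / y := by field_simp; exact hd.symm
        linarith
      have t3 : y * (Real.log x - Real.log y) ≤ y * (d / y) :=
        mul_le_mul_of_nonneg_left t2 hy0
      have t4 : y * (d / y) = d := by field_simp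
      linarith
  -- Step B : y log y - x log x ≤ -(d log d)
  have stepB : y * Real.log y - x * Real.log x ≤ -(d * Real.log d) := by
    rcases eq_or_lt_of_le hy0 with hy | hy
    · have hxd : x = d := by simp [hd, ← hy]
      simp [← hy, hxd]
    · have hx : 0 < x := lt_of_lt_of_le hy hyx
      have e : x * Real.log x = y * Real.log x + d * Real.log x := by
        rw [hd]; ring
      have t1 : y * Real.log y ≤ y * Real.log x :=
        mul_le_mul_of_nonneg_left (Real.log_le_log hy hyx) hy0
      have t2 : d * Real.log d ≤ d * Real.log x :=
        mul_le_mul_of_nonneg_left (Real.log_le_log hdz (by simp [hd]; linarith)) hd0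
      linarith
  -- bound d and -(d log d) by powers
  have habs : |x - y| = d := abs_of_nonneg hd0
  have hrw : |x * Real.log x - y * Real.log y| ≤ d + -(d * Real.log d) := by
    have h1 : 0 ≤ -(d * Real.log d) := by
      have := Real.log_nonpos hd0 hd1
      nlinarith
    rw [abs_le]
    constructor <;> linarith
  have pow1 : d ≤ d ^ c := by
    calc d = d ^ (1:ℝ) := (Real.rpow_one d).symm
    _ ≤ d ^ c := Real.rpow_le_rpow_of_exponent_ge hdz hd1 hc1.le
  have pow2 : -(d * Real.log d) ≤ (2 / (1 - c)) * d ^ c := by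
    have h1c : (0:ℝ) < 1 - c := by linarith
    -- -log d = log d⁻¹ ≤ (2/(1-c)) * (d⁻¹ ^ ((1-c)/2))
    have hlog : -Real.log d ≤ (2 / (1 - c)) * d ^ (-((1 - c) / 2)) := by
      have hinv : (0:ℝ) < d⁻¹ := by positivity
      have e1 : Real.log (d⁻¹ ^ ((1 - c) / 2)) = ((1 - c) / 2) * Real.log d⁻¹ :=
        Real.log_rpow hinv _
      have e2 : Real.log (d⁻¹ ^ ((1 - c) / 2)) ≤ d⁻¹ ^ ((1 - c) / 2) - 1 :=
        Real.log_le_sub_one_of_pos (Real.rpow_pos_of_pos hinv _)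
      have e3 : d⁻¹ ^ ((1 - c) / 2) - 1 ≤ d⁻¹ ^ ((1 - c) / 2) := by linarith
      have e4 : Real.log d⁻¹ ≤ (2 / (1 - c)) * d⁻¹ ^ ((1 - c) / 2) := by
        have : ((1 - c) / 2) * Real.log d⁻¹ ≤ d⁻¹ ^ ((1 - c) / 2) := by linarith
        calc Real.log d⁻¹ = (2 / (1 - c)) * (((1 - c) / 2) * Real.log d⁻¹) := by
              field_simp
          _ ≤ (2 / (1 - c)) * d⁻¹ ^ ((1 - c) / 2) := by
              apply mul_le_mul_of_nonneg_left this (by positivity)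
      have e5 : d⁻¹ ^ ((1 - c) / 2) = d ^ (-((1 - c) / 2)) := by
        rw [Real.inv_rpow hd0, ← Real.rpow_neg hd0]
      rw [Real.log_inv] at e4
      rw [← e5]
      exact e4
    have h2 : -(d * Real.log d) = d * (-Real.log d) := by ring
    rw [h2]
    calc d * (-Real.log d) ≤ d * ((2 / (1 - c)) * d ^ (-((1 - c) / 2))) :=
          mul_le_mul_of_nonneg_left hlog hd0
      _ = (2 / (1 - c)) * (d ^ (1:ℝ) * d ^ (-((1 - c) / 2))) := by
          rw [Real.rpow_one]; ring
      _ = (2 / (1 - c)) * d ^ (1 + -((1 - c) / 2)) := by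
          rw [← Real.rpow_add hdz]
      _ = (2 / (1 - c)) * d ^ ((1 + c) / 2) := by ring_nf
      _ ≤ (2 / (1 - c)) * d ^ c := by
          apply mul_le_mul_of_nonneg_left _ (by positivity)
          exact Real.rpow_le_rpow_of_exponent_ge hdz hd1 (by linarith)
  calc |x * Real.log x - y * Real.log y| ≤ d + -(d * Real.log d) := hrw
    _ ≤ d ^ c + (2 / (1 - c)) * d ^ c := by linarith
    _ = (1 + 2 / (1 - c)) * d ^ c := by ring
    _ = (1 + 2 / (1 - c)) * |x - y| ^ c := by rw [habs]

lemma entropy_bound (q : ℕ) {c : ℝ} (hc0 : 0 < c) (hc1 : c < 1) (θ p : Fin q → ℝ)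
    (hθ0 : ∀ z, 0 ≤ θ z) (hθ1 : ∑ z, θ z = 1)
    (hp0 : ∀ z, 0 ≤ p z) (hp1 : ∑ z, p z = 1)
    (hsupp : ∀ z, p z = 0 → θ z = 0) {ε : ℝ} (hε : 0 < ε)
    (hD : ∑ z, θ z * Real.log (θ z / p z) ≤ ε) :
    -∑ z, θ z * Real.log (p z)
      ≤ -∑ z, p z * Real.log (p z) + ε + q * (1 + 2 / (1 - c)) * (2 * ε) ^ (c / 2) := by
  have hθub : ∀ z, θ z ≤ 1 := by
    intro z
    rw [← hθ1]
    exact Finset.single_le_sum (fun w _ => hθ0 w) (Finset.mem_univ z)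
  have hpub : ∀ z, p z ≤ 1 := by
    intro z
    rw [← hp1]
    exact Finset.single_le_sum (fun w _ => hp0 w) (Finset.mem_univ z)
  -- pointwise L2 bound
  have hsq : ∀ z, (θ z - p z) ^ 2 ≤ 2 * ε := by
    intro z
    have hterm : ∀ w, (θ w - p w) ^ 2 / 2 ≤ θ w * Real.log (θ w / p w) - θ w + p w :=
      fun w => quad_bound (hθ0 w) (hθub w) (hp0 w) (hpub w) (hsupp w)
    have hsum : (θ z - p z) ^ 2 / 2 ≤ ∑ w, (θ w * Real.log (θ w / p w) - θ w + p w) := by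
      apply le_trans (hterm z)
      apply Finset.single_le_sum (f := fun w => θ w * Real.log (θ w / p w) - θ w + p w)
        (fun w _ => by
          have := hterm w
          nlinarith [sq_nonneg (θ w - p w)]) (Finset.mem_univ z)
    have hsum2 : ∑ w, (θ w * Real.log (θ w / p w) - θ w + p w)
        = ∑ w, θ w * Real.log (θ w / p w) - 1 + 1 := by
      rw [Finset.sum_add_distrib, Finset.sum_sub_distrib, hθ1, hp1]
    rw [hsum2] at hsum
    linarith
  have habs : ∀ z, |θ z - p z| ≤ (2 * ε) ^ ((1:ℝ) / 2) := by
    intro z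
    rw [← Real.sqrt_sq_eq_abs, ← Real.sqrt_eq_rpow]
    exact Real.sqrt_le_sqrt (hsq z)
  -- entropy difference bound
  have hent : (-∑ z, θ z * Real.log (θ z)) - (-∑ z, p z * Real.log (p z))
      ≤ q * (1 + 2 / (1 - c)) * (2 * ε) ^ (c / 2) := by
    have h1 : (-∑ z, θ z * Real.log (θ z)) - (-∑ z, p z * Real.log (p z))
        = ∑ z, (p z * Real.log (p z) - θ z * Real.log (θ z)) := by
      rw [Finset.sum_sub_distrib]; ring
    rw [h1]
    have h2 : ∀ z, p z * Real.log (p z) - θ z * Real.log (θ z)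
        ≤ (1 + 2 / (1 - c)) * (2 * ε) ^ (c / 2) := by
      intro z
      have hh := xlogx_holder hc0 hc1 (hp0 z) (hpub z) (hθ0 z) (hθub z)
      have h3 : |p z - θ z| ^ c ≤ (2 * ε) ^ (c / 2) := by
        have h4 : |p z - θ z| ≤ (2 * ε) ^ ((1:ℝ) / 2) := by
          rw [abs_sub_comm]; exact habs z
        calc |p z - θ z| ^ c ≤ ((2 * ε) ^ ((1:ℝ)/2)) ^ c :=
              Real.rpow_le_rpow (abs_nonneg _) h4 hc0.le
          _ = (2 * ε) ^ ((1:ℝ)/2 * c) := by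
              rw [← Real.rpow_mul (by positivity)]
          _ = (2 * ε) ^ (c / 2) := by ring_nf
      have h5 := le_trans (le_abs_self _) hh
      have hCpos : (0:ℝ) ≤ 1 + 2 / (1 - c) := by
        have h1c : (0:ℝ) < 1 - c := by linarith
        positivity
      calc p z * Real.log (p z) - θ z * Real.log (θ z)
          ≤ (1 + 2 / (1 - c)) * |p z - θ z| ^ c := h5
        _ ≤ (1 + 2 / (1 - c)) * (2 * ε) ^ (c / 2) :=
            mul_le_mul_of_nonneg_left h3 hCpos
    calc ∑ z, (p z * Real.log (p z) - θ z * Real.log (θ z))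
        ≤ ∑ _z : Fin q, (1 + 2 / (1 - c)) * (2 * ε) ^ (c / 2) :=
          Finset.sum_le_sum (fun z _ => h2 z)
      _ = q * ((1 + 2 / (1 - c)) * (2 * ε) ^ (c / 2)) := by
          rw [Finset.sum_const, Finset.card_univ, Fintype.card_fin, nsmul_eq_mul]
      _ = q * (1 + 2 / (1 - c)) * (2 * ε) ^ (c / 2) := by ring
  -- KL decomposition
  have point : ∀ z, θ z * Real.log (θ z / p z)
      = θ z * Real.log (θ z) - θ z * Real.log (p z) := by
    intro z
    rcases eq_or_lt_of_le (hθ0 z) with h | h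
    · simp [← h]
    · have hpz : p z ≠ 0 := by
        intro hp
        exact h.ne' (hsupp z hp)
      rw [Real.log_div h.ne' hpz]
      ring
  have hdecomp : -∑ z, θ z * Real.log (p z)
      = (∑ z, θ z * Real.log (θ z / p z)) + (-∑ z, θ z * Real.log (θ z)) := by
    rw [Finset.sum_congr rfl (fun z _ => point z), Finset.sum_sub_distrib]
    ring
  rw [hdecomp]
  linarith

/-- Size of the typical set: for a distribution `p*` on `{0,…,q−1}`, the set of vectors
`x ∈ {0,…,q−1}^n` whose empirical type `θ_x` satisfies `D(θ_x‖p*) ≤ n^(−γ)` has at most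
`q^(n·H(p*) + A·n^β)` elements, for any `β ∈ (1−γ/2, 1)` and a constant `A = A(β,γ,q)`.
Typicality includes the support condition `p*(z) = 0 → θ_x(z) = 0`, matching the KL
divergence convention `D = +∞` otherwise. -/
theorem typical_set_size (q : ℕ) (hq : 2 ≤ q) (γ : ℝ) (hγ0 : 0 < γ) (hγ1 : γ < 1)
    (β : ℝ) (hβ0 : 1 - γ / 2 < β) (hβ1 : β < 1) :
    ∃ A : ℝ, 0 < A ∧ ∀ n : ℕ, 1 ≤ n → ∀ p : Fin q → ℝ,
      (∀ z, 0 ≤ p z) → (∑ z, p z) = 1 →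
      (Nat.card {x : Fin n → Fin q //
          (∀ z : Fin q, p z = 0 → Nat.card {i : Fin n // x i = z} = 0) ∧
          (∑ z : Fin q, ((Nat.card {i : Fin n // x i = z} : ℝ) / n) *
              Real.log (((Nat.card {i : Fin n // x i = z} : ℝ) / n) / p z))
            ≤ (n : ℝ) ^ (-γ)} : ℝ)
        ≤ (q : ℝ) ^ ((n : ℝ) * (-∑ z : Fin q, p z * Real.logb q (p z)) + A * (n : ℝ) ^ β) := by
  classical
  set c : ℝ := 2 * (1 - β) / γ with hcdef
  have hc0 : 0 < c := div_pos (by linarith) hγ0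
  have hc1 : c < 1 := by
    rw [hcdef, div_lt_one hγ0]
    linarith
  set C : ℝ := 1 + 2 / (1 - c) with hCdef
  have hCpos : 0 < C := by
    have h1c : (0:ℝ) < 1 - c := by linarith
    positivity
  have hq0 : (0:ℝ) < q := by positivity
  have hq1 : (1:ℝ) < q := by exact_mod_cast hq.trans_lt' one_lt_two
  have hlq : 0 < Real.log q := Real.log_pos hq1
  refine ⟨(q * C * 2 + 1) / Real.log q, by positivity, ?_⟩
  intro n hn p hp0 hp1
  set A : ℝ := (q * C * 2 + 1) / Real.log q with hAdef
  have hn0 : (0:ℝ) < n := by exact_mod_cast hn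
  have hn1 : (1:ℝ) ≤ n := by exact_mod_cast hn
  set ε : ℝ := (n:ℝ) ^ (-γ) with hεdef
  have hεpos : 0 < ε := Real.rpow_pos_of_pos hn0 _
  set E : ℝ := (n : ℝ) * (-∑ z : Fin q, p z * Real.logb q (p z)) + A * (n : ℝ) ^ β with hEdef
  clear_value c C A ε E
  simp only [Nat.card_eq_fintype_card, Fintype.card_subtype]
  set k : (Fin n → Fin q) → Fin q → ℕ :=
    fun x z => (Finset.univ.filter fun i => x i = z).card with hkdef
  -- basic facts about fiber counts
  have hsumk : ∀ x : Fin n → Fin q, ∑ z, (k x z : ℝ) = n := by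
    intro x
    have h0 := Finset.card_eq_sum_card_fiberwise
      (f := x) (s := Finset.univ) (t := Finset.univ) (fun i _ => Finset.mem_univ _)
    rw [Finset.card_univ, Fintype.card_fin] at h0
    exact_mod_cast h0.symm
  have hprodk : ∀ x : Fin n → Fin q, ∏ i, p (x i) = ∏ z, p z ^ (k x z) := by
    intro x
    rw [← Finset.prod_fiberwise' Finset.univ x p]
    exact Finset.prod_congr rfl (fun z _ => by rw [Finset.prod_const])
  -- the per-element lower bound on the product
  have key : ∀ x : Fin n → Fin q,
      (∀ z : Fin q, p z = 0 → k x z = 0) →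
      (∑ z : Fin q, ((k x z : ℝ) / n) * Real.log (((k x z : ℝ) / n) / p z)) ≤ ε →
      (q : ℝ) ^ (-E) ≤ ∏ i, p (x i) := by
    intro x hxsupp hxD
    set θ : Fin q → ℝ := fun z => (k x z : ℝ) / n with hθdef
    have hθ0 : ∀ z, 0 ≤ θ z := fun z => by positivity
    have hθ1 : ∑ z, θ z = 1 := by
      rw [hθdef, ← Finset.sum_div, hsumk x, div_self hn0.ne']
    have hθsupp : ∀ z, p z = 0 → θ z = 0 := by
      intro z hz
      simp [hθdef, hxsupp z hz]
    have hmain := entropy_bound q hc0 hc1 θ p hθ0 hθ1 hp0 hp1 hθsupp hεpos hxD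
    -- numeric bound on the error terms
    have h2ε : (2 * ε) ^ (c / 2) ≤ 2 * (n:ℝ) ^ (β - 1) := by
      rw [Real.mul_rpow (by norm_num) hεpos.le]
      have e1 : (2:ℝ) ^ (c / 2) ≤ 2 := by
        calc (2:ℝ) ^ (c / 2) ≤ 2 ^ (1:ℝ) :=
              Real.rpow_le_rpow_of_exponent_le one_le_two (by linarith)
          _ = 2 := Real.rpow_one 2
      have e2 : ε ^ (c / 2) = (n:ℝ) ^ (β - 1) := by
        rw [hεdef, ← Real.rpow_mul hn0.le]
        congr 1
        rw [hcdef]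
        field_simp
        ring
      rw [e2]
      exact mul_le_mul_of_nonneg_right e1 (Real.rpow_nonneg hn0.le _)
    have hεle : ε ≤ (n:ℝ) ^ (β - 1) := by
      rw [hεdef]
      exact Real.rpow_le_rpow_of_exponent_le hn1 (by linarith)
    have herr : ε + q * C * (2 * ε) ^ (c / 2) ≤ (q * C * 2 + 1) * (n:ℝ) ^ (β - 1) := by
      have := mul_le_mul_of_nonneg_left h2ε (by positivity : (0:ℝ) ≤ q * C)
      nlinarith
    -- conclude θ-level bound
    rw [← hCdef] at hmain
    have hθp : ∑ z, p z * Real.log (p z) - (q * C * 2 + 1) * (n:ℝ) ^ (β - 1)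
        ≤ ∑ z, θ z * Real.log (p z) := by
      linarith
    -- multiply by n
    have hklog : ∑ z, (k x z : ℝ) * Real.log (p z) = (n:ℝ) * ∑ z, θ z * Real.log (p z) := by
      rw [Finset.mul_sum]
      apply Finset.sum_congr rfl
      intro z _
      rw [hθdef]
      field_simp
    have hnb : (n:ℝ) ^ (β - 1) * n = (n:ℝ) ^ β := by
      nth_rewrite 2 [← Real.rpow_one (n:ℝ)]
      rw [← Real.rpow_add hn0]
      norm_num
    -- the exponent computation
    have hHq : (∑ z, p z * Real.logb q (p z)) * Real.log q = ∑ z, p z * Real.log (p z) := by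
      rw [Finset.sum_mul]
      apply Finset.sum_congr rfl
      intro z _
      rw [Real.logb]
      field_simp
    have hAlq : A * Real.log q = q * C * 2 + 1 := by
      rw [hAdef]
      field_simp
    have hexp : -E * Real.log q ≤ ∑ z, (k x z : ℝ) * Real.log (p z) := by
      have e3 : -E * Real.log q
          = (n:ℝ) * (∑ z, p z * Real.log (p z)) - (q * C * 2 + 1) * (n:ℝ) ^ β := by
        rw [hEdef]
        have : -((n : ℝ) * (-∑ z : Fin q, p z * Real.logb q (p z)) + A * (n : ℝ) ^ β)
            * Real.log q
            = (n:ℝ) * ((∑ z, p z * Real.logb q (p z)) * Real.log q)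
              - (A * Real.log q) * (n:ℝ) ^ β := by ring
        rw [this, hHq, hAlq]
      rw [e3, hklog]
      have h5 := mul_le_mul_of_nonneg_left hθp (le_of_lt hn0)
      have h6 : (n:ℝ) * (∑ z, p z * Real.log (p z) - (q * C * 2 + 1) * (n:ℝ) ^ (β - 1))
          = (n:ℝ) * (∑ z, p z * Real.log (p z)) - (q * C * 2 + 1) * (n:ℝ) ^ β := by
        rw [← hnb]
        ring
      linarith
    -- positivity of the product and final exp comparison
    have hfac : ∀ z : Fin q, p z ^ (k x z) ≠ 0 := by
      intro z
      rcases Nat.eq_zero_or_pos (k x z) with h | h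
      · rw [h, pow_zero]; exact one_ne_zero
      · have hpz : p z ≠ 0 := fun hz => by
          have := hxsupp z hz
          omega
        exact pow_ne_zero _ hpz
    have hFpos : 0 < ∏ z, p z ^ (k x z) := by
      have : ∀ z ∈ Finset.univ, (0:ℝ) < p z ^ (k x z) := by
        intro z _
        rcases (hp0 z).lt_or_eq with h | h
        · positivity
        · have := hxsupp z h.symm
          rw [this, pow_zero]
          norm_num
      exact Finset.prod_pos this
    have hlogF : Real.log (∏ z, p z ^ (k x z)) = ∑ z, (k x z : ℝ) * Real.log (p z) := by
      rw [Real.log_prod (fun z _ => hfac z)]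
      exact Finset.sum_congr rfl (fun z _ => by rw [Real.log_pow])
    rw [hprodk x]
    calc (q:ℝ) ^ (-E) = Real.exp (-E * Real.log q) := by
          rw [Real.rpow_def_of_pos hq0, mul_comm]
      _ ≤ Real.exp (Real.log (∏ z, p z ^ (k x z))) := by
          apply Real.exp_le_exp.2
          rw [hlogF]
          exact hexp
      _ = ∏ z, p z ^ (k x z) := Real.exp_log hFpos
  -- counting
  set P : (Fin n → Fin q) → Prop := fun x =>
    (∀ z : Fin q, p z = 0 → k x z = 0) ∧
    (∑ z : Fin q, ((k x z : ℝ) / n) * Real.log (((k x z : ℝ) / n) / p z)) ≤ ε with hPdef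
  have hsum_all : ∑ x : Fin n → Fin q, ∏ i, p (x i) = 1 := by
    rw [← Fintype.sum_pow p n, hp1, one_pow]
  have hcount : ((Finset.univ.filter P).card : ℝ) * (q:ℝ) ^ (-E) ≤ 1 := by
    calc ((Finset.univ.filter P).card : ℝ) * (q:ℝ) ^ (-E)
        = ∑ _x ∈ Finset.univ.filter P, (q:ℝ) ^ (-E) := by
          rw [Finset.sum_const, nsmul_eq_mul]
      _ ≤ ∑ x ∈ Finset.univ.filter P, ∏ i, p (x i) := by
          apply Finset.sum_le_sum
          intro x hx
          have hx' := (Finset.mem_filter.1 hx).2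
          exact key x hx'.1 hx'.2
      _ ≤ ∑ x : Fin n → Fin q, ∏ i, p (x i) := by
          apply Finset.sum_le_sum_of_subset_of_nonneg (Finset.filter_subset _ _)
          intro x _ _
          exact Finset.prod_nonneg (fun i _ => hp0 _)
      _ = 1 := hsum_all
  have hfinal : ((Finset.univ.filter P).card : ℝ) ≤ (q:ℝ) ^ E := by
    have hqE : (0:ℝ) < (q:ℝ) ^ E := Real.rpow_pos_of_pos hq0 _
    have h7 : ((Finset.univ.filter P).card : ℝ) / (q:ℝ) ^ E ≤ 1 := by
      rw [div_eq_mul_inv, ← Real.rpow_neg hq0.le]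
      exact hcount
    exact (div_le_one hqE).1 h7
  exact hfinal
end

section
/- Let U_1,…,U_{q−1} be independent Poisson random variables with means λ_z ≥ 0, let s = Σ_{z=1}^{q−1} λ_z, and D_q = 1 − cos(2π/q). Then P(Σ_{z=1}^{q−1} z·U_z ≡ 0 mod q) ≤ (1/q)·[1 + (q−1)·e^{−D_q·s}]. -/
open Real

set_option maxHeartbeats 1000000

lemma hasSum_pi_prod_real : ∀ (n : ℕ) (h : Fin n → ℕ → ℝ), (∀ z k, 0 ≤ h z k) →
    (∀ z, Summable (h z)) →
    HasSum (fun u : Fin n → ℕ => ∏ z, h z (u z)) (∏ z, ∑' k, h z k) := by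
  intro n
  induction n with
  | zero =>
    intro h _ _
    simpa using hasSum_fintype (fun u : Fin 0 → ℕ => ∏ z, h z (u z))
  | succ n ih =>
    intro h h0 hs
    have h1 : HasSum (h 0) (∑' k, h 0 k) := (hs 0).hasSum
    have h2 := ih (fun z => h z.succ) (fun z k => h0 z.succ k) (fun z => hs z.succ)
    have hsum : Summable fun x : ℕ × (Fin n → ℕ) =>
        h 0 x.1 * ∏ z : Fin n, h z.succ (x.2 z) :=
      by
        apply Summable.mul_of_nonneg h1.summable h2.summable
        · intro k; exact h0 0 k
        · intro u; exact Finset.prod_nonneg fun z _ => h0 z.succ (u z)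
    have h3 := h1.mul h2 hsum
    have he : (fun u : Fin (n+1) → ℕ => ∏ z, h z (u z)) ∘ (Fin.consEquiv fun _ => ℕ) =
        fun x : ℕ × (Fin n → ℕ) => h 0 x.1 * ∏ z : Fin n, h z.succ (x.2 z) := by
      funext x; simp [Fin.consEquiv, Fin.prod_univ_succ]
    rw [← (Fin.consEquiv fun _ : Fin (n+1) => ℕ).hasSum_iff, he, Fin.prod_univ_succ]
    exact h3

lemma hasSum_pi_prod_complex : ∀ (n : ℕ) (g : Fin n → ℕ → ℂ),
    (∀ z, Summable fun k => ‖g z k‖) →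
    HasSum (fun u : Fin n → ℕ => ∏ z, g z (u z)) (∏ z, ∑' k, g z k) := by
  intro n
  induction n with
  | zero =>
    intro g _
    simpa using hasSum_fintype (fun u : Fin 0 → ℕ => ∏ z, g z (u z))
  | succ n ih =>
    intro g hs
    have h1 : HasSum (g 0) (∑' k, g 0 k) := ((hs 0).of_norm).hasSum
    have h2 := ih (fun z => g z.succ) (fun z => hs z.succ)
    have hnorm := hasSum_pi_prod_real n (fun z k => ‖g z.succ k‖)
      (fun z k => norm_nonneg _) (fun z => hs z.succ)
    have hsumn : Summable fun x : ℕ × (Fin n → ℕ) =>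
        ‖g 0 x.1‖ * ∏ z : Fin n, ‖g z.succ (x.2 z)‖ := by
      apply Summable.mul_of_nonneg (hs 0) hnorm.summable
      · intro k; exact norm_nonneg _
      · intro u; exact Finset.prod_nonneg fun z _ => norm_nonneg _
    have hsum : Summable fun x : ℕ × (Fin n → ℕ) =>
        g 0 x.1 * ∏ z : Fin n, g z.succ (x.2 z) := by
      apply Summable.of_norm
      simpa [norm_prod] using hsumn
    have h3 := h1.mul h2 hsum
    have he : (fun u : Fin (n+1) → ℕ => ∏ z, g z (u z)) ∘ (Fin.consEquiv fun _ => ℕ) =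
        fun x : ℕ × (Fin n → ℕ) => g 0 x.1 * ∏ z : Fin n, g z.succ (x.2 z) := by
      funext x; simp [Fin.consEquiv, Fin.prod_univ_succ]
    rw [← (Fin.consEquiv fun _ : Fin (n+1) => ℕ).hasSum_iff, he, Fin.prod_univ_succ]
    exact h3

-- Poisson-type sum: ∑ k, (e^{-λ} λ^k / k!) ζ^k = exp(-λ + λζ) for λ real, ζ : ℂ
lemma poisson_char_sum (lam : ℝ) (ζ : ℂ) :
    HasSum (fun k : ℕ => (Real.exp (-lam) * lam ^ k / (k : ℕ).factorial : ℂ) * ζ ^ k)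
      (Complex.exp (-lam * (1 - ζ))) := by
  have h1 : HasSum (fun k : ℕ => ((lam : ℂ) * ζ) ^ k / (k : ℕ).factorial)
      (Complex.exp ((lam : ℂ) * ζ)) := by
    rw [Complex.exp_eq_exp_ℂ]
    exact NormedSpace.expSeries_div_hasSum_exp ((lam : ℂ) * ζ)
  have h2 := h1.mul_left (Complex.exp (-lam))
  have : Complex.exp (-(lam:ℂ)) * Complex.exp ((lam:ℂ) * ζ) = Complex.exp (-lam * (1 - ζ)) := by
    rw [← Complex.exp_add]; ring_nf
  rw [this] at h2
  apply h2.congr_fun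
  intro k
  rw [Complex.ofReal_exp, Complex.ofReal_neg, mul_pow]
  push_cast
  ring

lemma omega_pow (q : ℕ) (hq : 0 < q) (N : ℕ) :
    Complex.exp (2 * Real.pi * Complex.I / q) ^ N =
      Complex.exp ((N : ℂ) * (2 * Real.pi * Complex.I / q)) := by
  rw [Complex.exp_nat_mul]

lemma omega_pow_q (q : ℕ) (hq : 0 < q) :
    Complex.exp (2 * Real.pi * Complex.I / q) ^ q = 1 := by
  rw [omega_pow q hq]
  have hq' : (q : ℂ) ≠ 0 := Nat.cast_ne_zero.mpr hq.ne'
  have : (q : ℂ) * (2 * Real.pi * Complex.I / q) = 2 * Real.pi * Complex.I := by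
    field_simp
  rw [this, Complex.exp_two_pi_mul_I]

lemma char_sum (q : ℕ) (hq : 0 < q) (N : ℕ) :
    ∑ l ∈ Finset.range q, Complex.exp (2 * Real.pi * Complex.I / q) ^ (l * N) =
      if N % q = 0 then (q : ℂ) else 0 := by
  set ω := Complex.exp (2 * Real.pi * Complex.I / q) with hω
  have hsum : ∀ l, ω ^ (l * N) = (ω ^ N) ^ l := by
    intro l; rw [mul_comm, pow_mul]
  simp_rw [hsum]
  by_cases hd : N % q = 0
  · have : q ∣ N := Nat.dvd_of_mod_eq_zero hd
    obtain ⟨c, rfl⟩ := this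
    rw [if_pos hd]
    have : ω ^ (q * c) = 1 := by rw [pow_mul, omega_pow_q q hq, one_pow]
    simp [this]
  · rw [if_neg hd]
    have hζq : (ω ^ N) ^ q = 1 := by
      rw [← pow_mul, mul_comm, pow_mul, omega_pow_q q hq, one_pow]
    have hζ1 : ω ^ N ≠ 1 := by
      intro h
      rw [omega_pow q hq] at h
      rw [Complex.exp_eq_one_iff] at h
      obtain ⟨n, hn⟩ := h
      have h2πI : (2 : ℂ) * Real.pi * Complex.I ≠ 0 := by
        simp [Complex.I_ne_zero, Real.pi_ne_zero, Complex.ofReal_ne_zero]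
      have hq' : (q : ℂ) ≠ 0 := Nat.cast_ne_zero.mpr hq.ne'
      have hNc : (N : ℂ) * (2 * Real.pi * Complex.I) = ((n : ℂ) * q) * (2 * Real.pi * Complex.I) := by
        field_simp at hn
        rw [hn]; ring
      have hNc2 : (N : ℂ) = (n : ℂ) * q := mul_right_cancel₀ h2πI hNc
      have hNz : (N : ℤ) = n * q := by exact_mod_cast hNc2
      apply hd
      have hdvd : (q : ℤ) ∣ (N : ℤ) := ⟨n, by rw [hNz]; ring⟩
      have : q ∣ N := Int.ofNat_dvd.mp hdvd
      exact Nat.mod_eq_zero_of_dvd this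
    rw [geom_sum_eq hζ1, hζq]
    simp

lemma cos_mod_eq (q : ℕ) (hq : 0 < q) (m : ℕ) :
    Real.cos (2 * Real.pi * m / q) = Real.cos (2 * Real.pi * ((m % q : ℕ) : ℝ) / q) := by
  conv_lhs => rw [← Nat.mod_add_div m q]
  have : 2 * Real.pi * ((m % q : ℕ) + q * (m / q) : ℕ) / q
      = 2 * Real.pi * (m % q : ℕ) / q + (m / q : ℕ) * (2 * Real.pi) := by
    have hq' : (q : ℝ) ≠ 0 := Nat.cast_ne_zero.mpr hq.ne'
    push_cast
    field_simp
  rw [this, Real.cos_add_nat_mul_two_pi]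

lemma cos_le_of_nonzero_mod (q : ℕ) (hq2 : 2 ≤ q) (m : ℕ) (hm : ¬ q ∣ m) :
    Real.cos (2 * Real.pi * m / q) ≤ Real.cos (2 * Real.pi / q) := by
  have hq : 0 < q := by omega
  have hq' : (0:ℝ) < q := by exact_mod_cast hq
  rw [cos_mod_eq q hq m]
  set r := m % q with hr
  have hr1 : 1 ≤ r := by
    rcases Nat.pos_of_ne_zero (fun h => hm (Nat.dvd_of_mod_eq_zero h)) with h; exact h
  have hr2 : r < q := Nat.mod_lt m hq
  have hπ : (0:ℝ) < Real.pi := Real.pi_pos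
  rcases le_or_gt (2 * r) q with hcase | hcase
  · -- 2πr/q ≤ π
    apply Real.cos_le_cos_of_nonneg_of_le_pi
    · positivity
    · rw [div_le_iff₀ hq']
      have : (2 * r : ℝ) ≤ q := by exact_mod_cast hcase
      nlinarith
    · have h1r : (1:ℝ) ≤ r := by exact_mod_cast hr1
      calc 2 * Real.pi / (q:ℝ) = 2 * Real.pi * 1 / q := by ring
      _ ≤ 2 * Real.pi * r / q := by gcongr
  · -- use cos(2π - x) = cos x with r' = q - r
    have key : Real.cos (2 * Real.pi * r / q) = Real.cos (2 * Real.pi * (q - r : ℕ) / q) := by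
      have h1 : 2 * Real.pi * ((q - r : ℕ) : ℝ) / q = 2 * Real.pi - 2 * Real.pi * r / q := by
        have : ((q - r : ℕ) : ℝ) = (q : ℝ) - r := by
          have := Nat.cast_sub hr2.le (R := ℝ); rw [this]
        rw [this]
        field_simp
      rw [h1, Real.cos_two_pi_sub]
    rw [key]
    apply Real.cos_le_cos_of_nonneg_of_le_pi
    · positivity
    · rw [div_le_iff₀ hq']
      have : (2 * (q - r : ℕ) : ℝ) ≤ q := by
        have h1 : 2 * (q - r) ≤ q := by omega
        exact_mod_cast h1
      nlinarith
    · have h1r : (1:ℝ) ≤ ((q - r : ℕ) : ℝ) := by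
        have : 1 ≤ q - r := by omega
        exact_mod_cast this
      calc 2 * Real.pi / (q:ℝ) = 2 * Real.pi * 1 / q := by ring
      _ ≤ 2 * Real.pi * ((q - r : ℕ) : ℝ) / q := by gcongr


/-- For independent Poisson variables `U_z` with means `λ_z` (`z = 1,…,q−1`, `q` prime),
with `s = Σ_z λ_z` and `D_q = 1 − cos(2π/q)`, the probability that `Σ_z z·U_z ≡ 0 mod q`
is at most `(1/q)·[1 + (q−1)·e^{−D_q·s}]`. -/
theorem poisson_divisibility_bound (q : ℕ) (hq : q.Prime)
    (lam : Fin (q - 1) → ℝ) (hlam : ∀ z, 0 ≤ lam z) :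
    (∑' u : Fin (q - 1) → ℕ,
        (∏ z : Fin (q - 1), Real.exp (-lam z) * lam z ^ u z / (u z).factorial) *
          (if (∑ z : Fin (q - 1), ((z : ℕ) + 1) * u z) % q = 0 then 1 else 0))
      ≤ (1 / (q : ℝ)) * (1 + ((q : ℝ) - 1) *
          Real.exp (-(1 - Real.cos (2 * Real.pi / q)) * ∑ z : Fin (q - 1), lam z)) := by
  have hq2 : 2 ≤ q := hq.two_le
  have hq0 : 0 < q := by omega
  have hqR : (0:ℝ) < q := by exact_mod_cast hq0
  set ω : ℂ := Complex.exp (2 * Real.pi * Complex.I / q) with hω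
  have habs : ∀ m : ℕ, ‖ω ^ m‖ = 1 := by
    intro m
    have h1 : ω = Complex.exp (((2 * Real.pi / q : ℝ) : ℂ) * Complex.I) := by
      rw [hω]; congr 1; push_cast; ring
    rw [h1, ← Complex.exp_nat_mul]
    have h2 : (m : ℂ) * (((2 * Real.pi / q : ℝ) : ℂ) * Complex.I)
        = ((m * (2 * Real.pi / q) : ℝ) : ℂ) * Complex.I := by push_cast; ring
    rw [h2, Complex.norm_exp_ofReal_mul_I]
  have hre : ∀ m : ℕ, (ω ^ m).re = Real.cos (2 * Real.pi * m / q) := by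
    intro m
    rw [hω, ← Complex.exp_nat_mul]
    have h2 : (m:ℂ) * (2 * (Real.pi:ℂ) * Complex.I / q)
        = ((2 * Real.pi * m / q : ℝ) : ℂ) * Complex.I := by push_cast; ring
    rw [h2, Complex.exp_ofReal_mul_I_re]
  -- the pmf
  set p : Fin (q-1) → ℕ → ℝ := fun z k => Real.exp (-lam z) * lam z ^ k / k.factorial with hp
  have hp0 : ∀ z k, 0 ≤ p z k := by
    intro z k
    apply div_nonneg (mul_nonneg (Real.exp_pos _).le (pow_nonneg (hlam z) k))
    positivity
  have hpsum : ∀ z, Summable (p z) := by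
    intro z
    apply ((Real.summable_pow_div_factorial (lam z)).mul_left (Real.exp (-lam z))).congr
    intro k; rw [hp]; ring
  -- the Fourier-twisted pmfs
  set g : ℕ → Fin (q-1) → ℕ → ℂ :=
    fun l z k => ((p z k : ℝ) : ℂ) * ω ^ (l * (((z:ℕ) + 1) * k)) with hg
  have hgnorm : ∀ l z k, ‖g l z k‖ = p z k := by
    intro l z k
    rw [hg]
    rw [norm_mul, Complex.norm_real, habs, mul_one,
      Real.norm_eq_abs, abs_of_nonneg (hp0 z k)]
  have hgsummable : ∀ l z, Summable fun k => ‖g l z k‖ := by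
    intro l z
    exact (hpsum z).congr fun k => (hgnorm l z k).symm
  have hgh : ∀ l z, HasSum (g l z)
      (Complex.exp (-(lam z : ℂ) * (1 - ω ^ (l * ((z:ℕ) + 1))))) := by
    intro l z
    apply (poisson_char_sum (lam z) (ω ^ (l * ((z:ℕ) + 1)))).congr_fun
    intro k
    rw [hg, ← pow_mul, mul_assoc]
    congr 1
    rw [hp]
    push_cast
    ring
  set T : ℕ → ℂ :=
    fun l => ∏ z : Fin (q-1), Complex.exp (-(lam z : ℂ) * (1 - ω ^ (l * ((z:ℕ) + 1)))) with hT
  have hGl : ∀ l, HasSum (fun u : Fin (q-1) → ℕ => ∏ z, g l z (u z)) (T l) := by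
    intro l
    have h1 := hasSum_pi_prod_complex (q-1) (g l) (fun z => hgsummable l z)
    have h2 : (∏ z : Fin (q-1), ∑' k, g l z k) = T l := by
      rw [hT]
      exact Finset.prod_congr rfl fun z _ => (hgh l z).tsum_eq
    rwa [h2] at h1
  -- pointwise Fourier inversion
  have hptwise : ∀ u : Fin (q-1) → ℕ,
      ∑ l ∈ Finset.range q, ∏ z, g l z (u z)
        = (q:ℂ) * ((∏ z, ((p z (u z) : ℝ) : ℂ)) *
            (if (∑ z : Fin (q-1), ((z:ℕ) + 1) * u z) % q = 0 then 1 else 0)) := by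
    intro u
    have hsplit : ∀ l, ∏ z, g l z (u z)
        = (∏ z, ((p z (u z) : ℝ):ℂ)) * ω ^ (l * ∑ z : Fin (q-1), ((z:ℕ)+1) * u z) := by
      intro l
      rw [hg]
      rw [Finset.prod_mul_distrib]
      congr 1
      rw [Finset.prod_pow_eq_pow_sum, Finset.mul_sum]
    simp_rw [hsplit]
    rw [← Finset.mul_sum, char_sum q hq0]
    split_ifs <;> ring
  have hGsum : HasSum (fun u : Fin (q-1) → ℕ => ∑ l ∈ Finset.range q, ∏ z, g l z (u z))
      (∑ l ∈ Finset.range q, T l) := hasSum_sum fun l _ => hGl l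
  have hqC : (q : ℂ) ≠ 0 := Nat.cast_ne_zero.mpr hq0.ne'
  have hFc : HasSum (fun u : Fin (q-1) → ℕ =>
      (∏ z, ((p z (u z) : ℝ) : ℂ)) *
        (if (∑ z : Fin (q-1), ((z:ℕ) + 1) * u z) % q = 0 then 1 else 0))
      ((q:ℂ)⁻¹ * ∑ l ∈ Finset.range q, T l) := by
    have h1 := (hGsum.mul_left ((q:ℂ)⁻¹))
    apply h1.congr_fun
    intro u
    rw [hptwise u, inv_mul_cancel_left₀ hqC]
  -- identify with real sum
  set F : (Fin (q-1) → ℕ) → ℝ := fun u =>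
    (∏ z, p z (u z)) * (if (∑ z : Fin (q-1), ((z:ℕ) + 1) * u z) % q = 0 then 1 else 0) with hF
  have hFc2 : HasSum (fun u => ((F u : ℝ) : ℂ)) ((q:ℂ)⁻¹ * ∑ l ∈ Finset.range q, T l) := by
    apply hFc.congr_fun
    intro u
    rw [hF]
    push_cast [apply_ite (fun x : ℝ => (x : ℂ))]
    rfl
  have hprodsum := hasSum_pi_prod_real (q-1) p hp0 hpsum
  have hF0 : ∀ u, 0 ≤ F u := by
    intro u
    simp only [hF]
    apply mul_nonneg (Finset.prod_nonneg fun z _ => hp0 z (u z))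
    split_ifs <;> norm_num
  have hFle : ∀ u, F u ≤ ∏ z, p z (u z) := by
    intro u
    simp only [hF]
    split_ifs
    · simp
    · rw [mul_zero]; exact Finset.prod_nonneg fun z _ => hp0 z (u z)
  have hFsummable : Summable F :=
    Summable.of_nonneg_of_le hF0 hFle hprodsum.summable
  have hFval : (∑' u, F u) = ((q:ℂ)⁻¹ * ∑ l ∈ Finset.range q, T l).re := by
    have h1 : HasSum (fun u => ((F u : ℝ) : ℂ)) (((∑' u, F u : ℝ) : ℝ) : ℂ) :=
      Complex.hasSum_ofReal.mpr hFsummable.hasSum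
    have h2 := h1.unique hFc2
    rw [← h2, Complex.ofReal_re]
  -- T 0 = 1
  have hT0 : T 0 = 1 := by
    rw [hT]
    simp
  set D : ℝ := 1 - Real.cos (2 * Real.pi / q) with hD
  set sl : ℝ := ∑ z : Fin (q-1), lam z with hsl
  have hTbound : ∀ l ∈ Finset.Ico 1 q, ‖T l‖ ≤ Real.exp (-D * sl) := by
    intro l hl
    rw [Finset.mem_Ico] at hl
    rw [hT]
    rw [norm_prod]
    have hle : ∀ z : Fin (q-1),
        ‖Complex.exp (-(lam z:ℂ) * (1 - ω ^ (l * ((z:ℕ)+1))))‖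
          ≤ Real.exp (-(lam z) * D) := by
      intro z
      rw [Complex.norm_exp]
      apply Real.exp_le_exp.mpr
      have hrezz : (-(lam z:ℂ) * (1 - ω ^ (l * ((z:ℕ)+1)))).re
          = -(lam z) * (1 - Real.cos (2*Real.pi*(l*((z:ℕ)+1))/q)) := by
        have := hre (l * ((z:ℕ)+1))
        simp only [Complex.mul_re, Complex.sub_re, Complex.sub_im, Complex.neg_re,
          Complex.neg_im, Complex.ofReal_re, Complex.ofReal_im, Complex.one_re,
          Complex.one_im, this]
        push_cast
        ring
      rw [hrezz]
      have hnd : ¬ q ∣ (l * ((z:ℕ)+1)) := by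
        intro hdvd
        rcases (Nat.Prime.dvd_mul hq).mp hdvd with h | h
        · exact absurd (Nat.le_of_dvd (by omega) h) (by omega)
        · have hz := z.isLt
          exact absurd (Nat.le_of_dvd (by omega) h) (by omega)
      have hcos := cos_le_of_nonzero_mod q hq2 (l * ((z:ℕ)+1)) hnd
      have hl0 := hlam z
      have hcast : Real.cos (2 * Real.pi * ((l * ((z:ℕ)+1) : ℕ) : ℝ) / q)
          = Real.cos (2*Real.pi*(l*((z:ℕ)+1))/q) := by push_cast; ring_nf
      rw [hcast] at hcos
      rw [hD]
      nlinarith [hcos]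
    calc ∏ z : Fin (q-1), ‖Complex.exp (-(lam z:ℂ) * (1 - ω ^ (l * ((z:ℕ)+1))))‖
        ≤ ∏ z : Fin (q-1), Real.exp (-(lam z) * D) :=
          Finset.prod_le_prod (fun z _ => norm_nonneg _) (fun z _ => hle z)
      _ = Real.exp (∑ z : Fin (q-1), -(lam z) * D) := (Real.exp_sum _ _).symm
      _ = Real.exp (-D * sl) := by
          congr 1
          rw [hsl, Finset.mul_sum]
          apply Finset.sum_congr rfl
          intro z _
          ring
  have hsplit : ∑ l ∈ Finset.range q, T l = 1 + ∑ l ∈ Finset.Ico 1 q, T l := by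
    rw [Finset.range_eq_Ico, Finset.sum_eq_sum_Ico_succ_bot hq0, hT0]
  have hre2 : ((q:ℂ)⁻¹ * ∑ l ∈ Finset.range q, T l).re
      = (1/(q:ℝ)) * (1 + (∑ l ∈ Finset.Ico 1 q, T l).re) := by
    rw [hsplit]
    have hcast : ((q:ℂ))⁻¹ = (((q:ℝ)⁻¹ : ℝ) : ℂ) := by
      rw [Complex.ofReal_inv, Complex.ofReal_natCast]
    rw [hcast]
    simp [Complex.mul_re, Complex.add_re, Complex.one_re, one_div]
  have hRbound : (∑ l ∈ Finset.Ico 1 q, T l).re ≤ ((q:ℝ) - 1) * Real.exp (-D * sl) := by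
    calc (∑ l ∈ Finset.Ico 1 q, T l).re
        ≤ ‖∑ l ∈ Finset.Ico 1 q, T l‖ := Complex.re_le_norm _
      _ ≤ ∑ l ∈ Finset.Ico 1 q, ‖T l‖ := norm_sum_le _ _
      _ ≤ ∑ l ∈ Finset.Ico 1 q, Real.exp (-D * sl) := Finset.sum_le_sum hTbound
      _ = ((q:ℝ) - 1) * Real.exp (-D * sl) := by
          rw [Finset.sum_const, Nat.card_Ico, nsmul_eq_mul]
          congr 1
          rw [Nat.cast_sub (by omega)]
          norm_num
  have hgoal : (∑' u : Fin (q - 1) → ℕ,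
        (∏ z : Fin (q - 1), Real.exp (-lam z) * lam z ^ u z / (u z).factorial) *
          (if (∑ z : Fin (q - 1), ((z : ℕ) + 1) * u z) % q = 0 then 1 else 0))
      = ∑' u, F u := rfl
  rw [hgoal, hFval, hre2]
  have h1q : (0:ℝ) ≤ 1/(q:ℝ) := by positivity
  apply mul_le_mul_of_nonneg_left _ h1q
  linarith [hRbound]
end

section
/- Suppose a sequence of counter braids with n input nodes and m_n registers of capacity q satisfies m_n·log_2 q / n → r with r < H_2(p), where inputs X_1,…,X_n are iid with distribution p on the nonnegative integers. Then for any sequence of reconstruction functions F̂_n : Z_q^{m_n} → N^n, the error probability P(F̂_n(Y) ≠ X) is bounded away from 0 for large n; i.e., no reliable counter braid exists at rates below the entropy. -/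
open Real Filter

set_option maxHeartbeats 1000000

section CounterBraidAux
open Finset


lemma tsum_pi_pow (f : ℕ → ENNReal) (n : ℕ) :
    ∑' x : Fin n → ℕ, ∏ i, f (x i) = (∑' k, f k) ^ n := by
  induction n with
  | zero => rw [tsum_eq_single (fun i => i.elim0) (by intro b hb; exact absurd (funext fun i => i.elim0) hb)]; simp
  | succ n ih =>
    rw [← (Fin.consEquiv (fun _ : Fin (n+1) => ℕ)).tsum_eq]
    simp only [Fin.consEquiv_apply]
    rw [ENNReal.tsum_prod']
    simp only [Fin.prod_univ_succ, Fin.cons_zero, Fin.cons_succ]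
    rw [pow_succ]
    calc ∑' (a : ℕ) (b : Fin n → ℕ), f a * ∏ i, f (b i)
        = ∑' (a : ℕ), f a * ∑' b : Fin n → ℕ, ∏ i, f (b i) := by
          congr 1; ext a; rw [ENNReal.tsum_mul_left]
      _ = (∑' k, f k) * (∑' k, f k) ^ n := by rw [ih, ENNReal.tsum_mul_right]
      _ = (∑' k, f k) ^ n * (∑' k, f k) := mul_comm _ _

lemma sum_pi_prod {n M : ℕ} (g : Fin n → Fin M → ℝ) :
    ∑ y : Fin n → Fin M, ∏ k, g k (y k) = ∏ k, ∑ a, g k a :=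
  (Fintype.prod_sum g).symm

lemma cheb {M : ℕ} (w L : Fin M → ℝ) (hw1 : ∑ a, w a = 1)
    (hmean : ∑ a, w a * L a = 0) (n : ℕ) :
    ∑ y : Fin n → Fin M, (∏ i, w (y i)) * (∑ i, L (y i))^2
      = n * ∑ a, w a * (L a)^2 := by
  have key : ∀ i j : Fin n,
      ∑ y : Fin n → Fin M, (∏ k, w (y k)) * (L (y i) * L (y j))
        = if i = j then ∑ a, w a * (L a)^2 else 0 := by
    intro i j
    have hfac : ∀ y : Fin n → Fin M,
        (∏ k, w (y k)) * (L (y i) * L (y j))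
          = ∏ k, (w (y k) * ((if i = k then L (y k) else 1) * (if j = k then L (y k) else 1))) := by
      intro y
      rw [Finset.prod_mul_distrib, Finset.prod_mul_distrib,
        Finset.prod_ite_eq (Finset.univ : Finset (Fin n)) i (fun k => L (y k)),
        Finset.prod_ite_eq (Finset.univ : Finset (Fin n)) j (fun k => L (y k))]
      simp
    rw [Finset.sum_congr rfl fun y _ => hfac y,
      sum_pi_prod (fun k a => (w a * ((if i = k then L a else 1) * (if j = k then L a else 1))))]
    by_cases hij : i = j
    · subst hij
      rw [if_pos rfl, Finset.prod_eq_single i]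
      · simp [sq, mul_assoc]
      · intro k _ hk
        simp only [if_neg (fun h : i = k => hk h.symm)]
        simpa using hw1
      · simp
    · rw [if_neg hij, Finset.prod_eq_zero (Finset.mem_univ i)]
      simp only [if_pos rfl, if_neg (fun h : j = i => hij h.symm)]
      simpa using hmean
  calc ∑ y : Fin n → Fin M, (∏ i, w (y i)) * (∑ i, L (y i))^2
      = ∑ y : Fin n → Fin M, ∑ i, ∑ j, (∏ k, w (y k)) * (L (y i) * L (y j)) := by
        refine Finset.sum_congr rfl fun y _ => ?_
        rw [sq, Finset.sum_mul_sum, Finset.mul_sum]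
        exact Finset.sum_congr rfl fun i _ => by rw [Finset.mul_sum]
    _ = ∑ i : Fin n, ∑ j : Fin n, ∑ y : Fin n → Fin M, (∏ k, w (y k)) * (L (y i) * L (y j)) := by
        rw [Finset.sum_comm]
        exact Finset.sum_congr rfl fun i _ => Finset.sum_comm
    _ = ∑ i : Fin n, ∑ j : Fin n, if i = j then ∑ a, w a * (L a)^2 else 0 := by
        exact Finset.sum_congr rfl fun i _ => Finset.sum_congr rfl fun j _ => key i j
    _ = n * ∑ a, w a * (L a)^2 := by
        simp [Finset.sum_ite_eq, Finset.mul_sum]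

end CounterBraidAux

open Finset in

/-- Converse (impossibility) for counter braids: if the asymptotic rate
`r = lim m_n·log₂ q / n` is below the binary entropy `H₂(p)` of the iid input
distribution `p`, then for any sequence of deterministic storage functions
`F : ℕ^n → Z_q^{m_n}` (in particular the storage function of any counter braid) and any
reconstruction functions `G`, the error probability `P(G(F(X)) ≠ X)` is bounded away
from zero for all large `n`. -/
theorem counter_braid_converse (q : ℕ) (hq : 2 ≤ q) (p : ℕ → ℝ)
    (hp0 : ∀ n, 0 ≤ p n) (hps : Summable p) (hp1 : (∑' n, p n) = 1)
    (m : ℕ → ℕ) (r : ℝ)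
    (hr : Tendsto (fun n : ℕ => (m n : ℝ) * Real.logb 2 q / n) atTop (nhds r))
    (hrH : r < ∑' n : ℕ, -(p n * Real.logb 2 (p n))) :
    ∃ δ : ℝ, 0 < δ ∧ ∃ n₀ : ℕ, ∀ n : ℕ, n₀ ≤ n →
      ∀ (F : (Fin n → ℕ) → (Fin (m n) → ZMod q))
        (G : (Fin (m n) → ZMod q) → (Fin n → ℕ)),
      δ ≤ ∑' x : {x : Fin n → ℕ // G (F x) ≠ x}, ∏ i : Fin n, p (x.val i) := by
  have hp_le1 : ∀ k, p k ≤ 1 := by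
    intro k
    have := Summable.le_tsum hps k (fun j _ => hp0 j)
    linarith [hp1 ▸ this]
  set e : ℕ → ℝ := fun k => -(p k * Real.logb 2 (p k)) with he_def
  have he0 : ∀ k, 0 ≤ e k := by
    intro k
    rcases eq_or_lt_of_le (hp0 k) with h | h
    · simp [he_def, ← h]
    · have : Real.logb 2 (p k) ≤ 0 := Real.logb_nonpos one_lt_two (hp0 k) (hp_le1 k)
      simp only [he_def, neg_nonneg]
      exact mul_nonpos_of_nonneg_of_nonpos (hp0 k) this
  have hr0 : 0 ≤ r := by
    refine ge_of_tendsto' hr fun n => ?_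
    have h2 : (0:ℝ) ≤ Real.logb 2 q := Real.logb_nonneg one_lt_two (by exact_mod_cast hq.trans' one_le_two)
    positivity
  have hse : Summable e := by
    by_contra hns
    rw [tsum_eq_zero_of_not_summable hns] at hrH
    linarith
  set H := ∑' k, e k with hH_def
  have hrH' : r < H := hrH
  set ε := (H - r) / 3 with hε_def
  have hε : 0 < ε := by simp only [hε_def]; linarith
  -- choose N
  obtain ⟨N, hN1, hNsum⟩ : ∃ N : ℕ, 1 ≤ N ∧ r + 2 * ε ≤ ∑ k ∈ Finset.range N, e k := by
    have htend := hse.hasSum.tendsto_sum_nat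
    have hev : ∀ᶠ N in atTop, r + 2 * ε < ∑ k ∈ Finset.range N, e k := by
      refine htend.eventually (eventually_gt_nhds ?_)
      simp only [hε_def]; linarith
    obtain ⟨N, hN⟩ := (hev.and (eventually_ge_atTop 1)).exists
    exact ⟨N, hN.2, hN.1.le⟩
  -- merged distribution on Fin (N+1)
  set t : ℝ := 1 - ∑ k ∈ Finset.range N, p k with ht_def
  have hpartial_le : ∑ k ∈ Finset.range N, p k ≤ 1 := hp1 ▸ Summable.sum_le_tsum _ (fun j _ => hp0 j) hps
  have ht0 : 0 ≤ t := by simp only [ht_def]; linarith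
  have ht1 : t ≤ 1 := by
    have : 0 ≤ ∑ k ∈ Finset.range N, p k := Finset.sum_nonneg fun k _ => hp0 k
    simp only [ht_def]; linarith
  set w : Fin (N+1) → ℝ := fun a => if (a : ℕ) < N then p a else t with hw_def
  have hw0 : ∀ a, 0 ≤ w a := by
    intro a; simp only [hw_def]; split <;> [exact hp0 _; exact ht0]
  have hw_le1 : ∀ a, w a ≤ 1 := by
    intro a; simp only [hw_def]; split <;> [exact hp_le1 _; exact ht1]
  have hw1 : ∑ a, w a = 1 := by
    rw [Fin.sum_univ_castSucc]
    have h1 : ∀ a : Fin N, w a.castSucc = p a := by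
      intro a; simp only [hw_def, Fin.coe_castSucc, if_pos a.isLt]
    have h2 : w (Fin.last N) = t := by simp [hw_def]
    rw [Finset.sum_congr rfl fun a _ => h1 a, h2, Fin.sum_univ_eq_sum_range]
    simp only [ht_def]; ring
  set L : Fin (N+1) → ℝ := fun a => if w a = 0 then 0 else -Real.logb 2 (w a) with hL_def
  have hterm : ∀ a, w a * L a = -(w a * Real.logb 2 (w a)) := by
    intro a
    by_cases h : w a = 0
    · simp [hL_def, h]
    · simp only [hL_def, if_neg h, mul_neg, neg_inj]
  set μ := ∑ a, w a * L a with hμ_def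
  have hμ : r + 2 * ε ≤ μ := by
    have hlast : 0 ≤ w (Fin.last N) * L (Fin.last N) := by
      rw [hterm]
      have hwl : w (Fin.last N) = t := by simp [hw_def]
      rw [hwl]
      rcases eq_or_lt_of_le ht0 with h | h
      · simp [← h]
      · have : Real.logb 2 t ≤ 0 := Real.logb_nonpos one_lt_two ht0 ht1
        simp only [neg_nonneg]
        exact mul_nonpos_of_nonneg_of_nonpos ht0 this
    have hcast : ∀ a : Fin N, w a.castSucc * L a.castSucc = e (a : ℕ) := by
      intro a
      rw [hterm]
      have : w a.castSucc = p a := by simp only [hw_def, Fin.coe_castSucc, if_pos a.isLt]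
      rw [this]
    rw [hμ_def, Fin.sum_univ_castSucc, Finset.sum_congr rfl fun a _ => hcast a,
      Fin.sum_univ_eq_sum_range]
    calc r + 2 * ε ≤ ∑ k ∈ Finset.range N, e k := hNsum
      _ ≤ _ := le_add_of_nonneg_right hlast
  set V := ∑ a, w a * (L a - μ)^2 with hV_def
  have hV0 : 0 ≤ V := Finset.sum_nonneg fun a _ => mul_nonneg (hw0 a) (sq_nonneg _)
  -- the merging map
  set φ : ℕ → Fin (N+1) := fun k => if h : k < N then ⟨k, h.trans (Nat.lt_succ_self N)⟩ else Fin.last N with hφ_def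
  have hφ_bound : ∀ (u : Finset ℕ) (a : Fin (N+1)), (∀ k ∈ u, φ k = a) → ∑ k ∈ u, p k ≤ w a := by
    intro u a hu
    by_cases ha : (a : ℕ) < N
    · have hsub : u ⊆ {(a : ℕ)} := by
        intro k hk
        have := hu k hk
        simp only [hφ_def] at this
        split at this
        · simp [Finset.mem_singleton, ← Fin.val_eq_val] at this ⊢
          rw [← this]
        · exfalso
          rw [← this] at ha
          simp at ha
      calc ∑ k ∈ u, p k ≤ ∑ k ∈ {(a:ℕ)}, p k :=
            Finset.sum_le_sum_of_subset_of_nonneg hsub (fun k _ _ => hp0 k)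
        _ = p a := Finset.sum_singleton _ _
        _ = w a := by simp only [hw_def, if_pos ha]
    · have hwa : w a = t := by simp only [hw_def, if_neg ha]
      have hdisj : Disjoint u (Finset.range N) := by
        rw [Finset.disjoint_right]
        intro k hk hku
        have := hu k hku
        simp only [hφ_def, dif_pos (Finset.mem_range.mp hk)] at this
        rw [← this] at ha
        exact ha (Finset.mem_range.mp hk)
      have : ∑ k ∈ u ∪ Finset.range N, p k ≤ 1 :=
        hp1 ▸ Summable.sum_le_tsum _ (fun j _ => hp0 j) hps
      rw [Finset.sum_union hdisj] at this
      rw [hwa, ht_def]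
      linarith
  -- eventual bounds
  have hev1 : ∀ᶠ n : ℕ in atTop, (m n : ℝ) * Real.logb 2 q ≤ n * (r + ε/2) := by
    have h1 : ∀ᶠ n : ℕ in atTop, (m n : ℝ) * Real.logb 2 q / n ≤ r + ε/2 :=
      hr.eventually (eventually_le_nhds (by linarith))
    filter_upwards [h1, eventually_ge_atTop 1] with n h hn
    have hn' : (0:ℝ) < n := by exact_mod_cast hn
    rw [div_le_iff₀ hn'] at h
    linarith [h]
  have hev2 : ∀ᶠ n : ℕ in atTop, V / (n * ε^2) ≤ 1/4 := by
    have h1 : Tendsto (fun n : ℕ => (V / ε^2) / n) atTop (nhds 0) :=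
      tendsto_const_div_atTop_nhds_zero_nat _
    have h2 := h1.eventually (eventually_le_nhds (by norm_num : (0:ℝ) < 1/4))
    filter_upwards [h2] with n h
    calc V / (n * ε^2) = (V / ε^2) / n := by rw [div_div]; ring_nf
      _ ≤ 1/4 := h
  have hev3 : ∀ᶠ n : ℕ in atTop, (2:ℝ) ^ (-((n:ℝ) * (ε/2))) ≤ 1/4 := by
    have h1 : ∀ᶠ n : ℕ in atTop, (4 / ε : ℝ) ≤ (n : ℝ) :=
      tendsto_natCast_atTop_atTop.eventually_ge_atTop _
    filter_upwards [h1] with n h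
    have h2 : (2:ℝ) ≤ (n:ℝ) * (ε/2) := by
      rw [div_le_iff₀ hε] at h
      nlinarith
    calc (2:ℝ) ^ (-((n:ℝ) * (ε/2))) ≤ (2:ℝ) ^ (-(2:ℝ)) :=
          Real.rpow_le_rpow_of_exponent_le one_le_two (by linarith)
      _ = 1/4 := by
          rw [Real.rpow_neg (by norm_num), show ((2:ℝ):ℝ) = ((2:ℕ):ℝ) by norm_num,
            Real.rpow_natCast]
          norm_num
  obtain ⟨n₀, hn₀⟩ := eventually_atTop.mp ((hev1.and (hev2.and hev3)).and (eventually_ge_atTop 1))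
  refine ⟨1/2, by norm_num, n₀, fun n hn F G => ?_⟩
  obtain ⟨⟨hrate, hv4, hp4⟩, hn1⟩ := hn₀ n hn
  haveI : NeZero q := ⟨by omega⟩
  classical
  set 𝒮 : Finset (Fin n → ℕ) := (Finset.univ.image G).filter (fun x => G (F x) = x) with h𝒮_def
  have hcard𝒮 : 𝒮.card ≤ q ^ (m n) := by
    calc 𝒮.card ≤ (Finset.univ.image G).card := Finset.card_filter_le _ _
      _ ≤ (Finset.univ : Finset (Fin (m n) → ZMod q)).card := Finset.card_image_le
      _ = q ^ (m n) := by
        rw [Finset.card_univ, Fintype.card_fun, ZMod.card, Fintype.card_fin]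
  set Φ : (Fin n → ℕ) → (Fin n → Fin (N+1)) := fun x i => φ (x i) with hΦ_def
  set T : Finset (Fin n → Fin (N+1)) := 𝒮.image Φ with hT_def
  have hcardT : T.card ≤ q ^ (m n) := (Finset.card_image_le).trans hcard𝒮
  -- main real bound
  have hgood : ∑ x ∈ 𝒮, ∏ i, p (x i) ≤ 1/2 := by
    have hn0R : (0:ℝ) < n := by exact_mod_cast hn1
    -- A1 : compress to the finite alphabet
    have hA1 : ∑ x ∈ 𝒮, ∏ i, p (x i) ≤ ∑ y ∈ T, ∏ i, w (y i) := by
      rw [← Finset.sum_fiberwise_of_maps_to (g := Φ) (t := T)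
        (fun x hx => Finset.mem_image_of_mem Φ hx) (fun x => ∏ i, p (x i))]
      refine Finset.sum_le_sum fun y _ => ?_
      set u := 𝒮.filter (fun x => Φ x = y) with hu_def
      set s : Fin n → Finset ℕ := fun i => u.image (fun x => x i) with hs_def
      have hsub : u ⊆ Fintype.piFinset s := fun x hx =>
        Fintype.mem_piFinset.mpr fun i => Finset.mem_image_of_mem _ hx
      calc ∑ x ∈ u, ∏ i, p (x i)
          ≤ ∑ x ∈ Fintype.piFinset s, ∏ i, p (x i) :=
            Finset.sum_le_sum_of_subset_of_nonneg hsub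
              (fun x _ _ => Finset.prod_nonneg fun i _ => hp0 _)
        _ = ∏ i, ∑ k ∈ s i, p k := (Finset.prod_univ_sum s (fun _ k => p k)).symm
        _ ≤ ∏ i, w (y i) := by
            refine Finset.prod_le_prod
              (fun i _ => Finset.sum_nonneg fun k _ => hp0 k) (fun i _ => ?_)
            refine hφ_bound (s i) (y i) fun k hk => ?_
            obtain ⟨x, hx, rfl⟩ := Finset.mem_image.mp hk
            have : Φ x = y := (Finset.mem_filter.mp hx).2
            rw [← this]
    -- Chebyshev bound
    have hmean0 : ∑ a, w a * (L a - μ) = 0 := by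
      have : ∑ a, w a * (L a - μ) = (∑ a, w a * L a) - (∑ a, w a) * μ := by
        rw [Finset.sum_mul]
        rw [← Finset.sum_sub_distrib]
        exact Finset.sum_congr rfl fun a _ => by ring
      rw [this, hw1, ← hμ_def]; ring
    have hcheb := cheb w (fun a => L a - μ) hw1 hmean0 n
    set Bad : Finset (Fin n → Fin (N+1)) :=
      Finset.univ.filter (fun y => ∑ i, (L (y i) - μ) ≤ -(n * ε)) with hBad_def
    have hQ0 : ∀ y : Fin n → Fin (N+1), 0 ≤ ∏ i, w (y i) :=
      fun y => Finset.prod_nonneg fun i _ => hw0 _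
    have hBadBound : ∑ y ∈ Bad, ∏ i, w (y i) ≤ V / (n * ε^2) := by
      have h1 : (n * ε)^2 * ∑ y ∈ Bad, ∏ i, w (y i)
          ≤ ∑ y ∈ Bad, (∏ i, w (y i)) * (∑ i, (L (y i) - μ))^2 := by
        rw [Finset.mul_sum]
        refine Finset.sum_le_sum fun y hy => ?_
        have hd := (Finset.mem_filter.mp hy).2
        have hnε : (0:ℝ) ≤ n * ε := by positivity
        have hsq : ((n:ℝ) * ε)^2 ≤ (∑ i, (L (y i) - μ))^2 := by
          have h := sq_le_sq' (by linarith : -(-(∑ i, (L (y i) - μ))) ≤ (n:ℝ) * ε)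
            (by linarith : (n:ℝ) * ε ≤ -(∑ i, (L (y i) - μ)))
          rwa [neg_sq] at h
        calc ((n:ℝ) * ε)^2 * (∏ i, w (y i)) = (∏ i, w (y i)) * ((n:ℝ) * ε)^2 := mul_comm _ _
          _ ≤ (∏ i, w (y i)) * (∑ i, (L (y i) - μ))^2 :=
              mul_le_mul_of_nonneg_left hsq (hQ0 y)
      have h2 : ∑ y ∈ Bad, (∏ i, w (y i)) * (∑ i, (L (y i) - μ))^2
          ≤ ∑ y : Fin n → Fin (N+1), (∏ i, w (y i)) * (∑ i, (L (y i) - μ))^2 :=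
        Finset.sum_le_sum_of_subset_of_nonneg (Finset.subset_univ _)
          (fun y _ _ => mul_nonneg (hQ0 y) (sq_nonneg _))
      rw [hcheb] at h2
      have h3 : (n * ε)^2 * ∑ y ∈ Bad, ∏ i, w (y i) ≤ n * V := h1.trans h2
      have h4 : ∑ y ∈ Bad, ∏ i, w (y i) ≤ (n:ℝ) * V / ((n:ℝ) * ε)^2 := by
        rw [le_div_iff₀ (by positivity : (0:ℝ) < ((n:ℝ)*ε)^2)]
        linarith
      calc ∑ y ∈ Bad, ∏ i, w (y i) ≤ (n:ℝ) * V / ((n:ℝ) * ε)^2 := h4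
        _ = V / (n * ε^2) := by field_simp
    have hQle : ∀ y : Fin n → Fin (N+1), ¬(∑ i, (L (y i) - μ) ≤ -((n:ℝ) * ε)) →
        ∏ i, w (y i) ≤ (2:ℝ) ^ (-((n:ℝ) * (μ - ε))) := by
      intro y hy
      push_neg at hy
      by_cases hz : ∃ i, w (y i) = 0
      · obtain ⟨i, hi⟩ := hz
        rw [Finset.prod_eq_zero (Finset.mem_univ i) hi]
        positivity
      · push_neg at hz
        have hpos : ∀ i, 0 < w (y i) := fun i => lt_of_le_of_ne (hw0 _) (Ne.symm (hz i))
        have hLeq : ∀ i, L (y i) = -Real.logb 2 (w (y i)) := fun i => by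
          simp only [hL_def, if_neg (hz i)]
        have hprod : ∏ i, w (y i) = (2:ℝ) ^ (∑ i, Real.logb 2 (w (y i))) := by
          rw [Real.rpow_sum_of_pos two_pos]
          exact Finset.prod_congr rfl fun i _ =>
            (Real.rpow_logb two_pos (by norm_num) (hpos i)).symm
        rw [hprod]
        apply Real.rpow_le_rpow_of_exponent_le one_le_two
        have hsub : ∑ i, (L (y i) - μ) = ∑ i, L (y i) - (n:ℝ) * μ := by
          rw [Finset.sum_sub_distrib, Finset.sum_const, Finset.card_univ, Fintype.card_fin,
            nsmul_eq_mul]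
        have hlogsum : ∑ i, Real.logb 2 (w (y i)) = -∑ i, L (y i) := by
          rw [← Finset.sum_neg_distrib]
          exact Finset.sum_congr rfl fun i _ => by rw [hLeq i]; ring
        rw [hlogsum]
        rw [hsub] at hy
        linarith
    have hrpow0 : (0:ℝ) ≤ (2:ℝ) ^ (-((n:ℝ) * (μ - ε))) := Real.rpow_nonneg (by norm_num) _
    have hcard_bound : ((T.card : ℝ)) ≤ (2:ℝ) ^ ((n:ℝ) * (r + ε/2)) := by
      have hqpos : (0:ℝ) < (q:ℝ) := by positivity
      have h1 : ((T.card : ℝ)) ≤ ((q:ℝ)) ^ (m n) := by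
        have := hcardT
        exact_mod_cast Nat.cast_le.mpr this
      have h2 : ((q:ℝ)) ^ (m n) = (2:ℝ) ^ ((m n : ℝ) * Real.logb 2 (q:ℝ)) := by
        rw [mul_comm, Real.rpow_mul (by norm_num : (0:ℝ) ≤ 2),
          Real.rpow_logb two_pos (by norm_num) hqpos, Real.rpow_natCast]
      calc ((T.card : ℝ)) ≤ ((q:ℝ)) ^ (m n) := h1
        _ = (2:ℝ) ^ ((m n : ℝ) * Real.logb 2 (q:ℝ)) := h2
        _ ≤ (2:ℝ) ^ ((n:ℝ) * (r + ε/2)) :=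
            Real.rpow_le_rpow_of_exponent_le one_le_two hrate
    have hsplit := (Finset.sum_filter_add_sum_filter_not T
      (fun y => ∑ i, (L (y i) - μ) ≤ -((n:ℝ) * ε)) (fun y => ∏ i, w (y i))).symm
    have hpart1 : ∑ y ∈ T.filter (fun y => ∑ i, (L (y i) - μ) ≤ -((n:ℝ) * ε)), ∏ i, w (y i)
        ≤ V / ((n:ℝ) * ε^2) := by
      refine le_trans (Finset.sum_le_sum_of_subset_of_nonneg ?_ fun y _ _ => hQ0 y) hBadBound
      intro y hy
      rw [hBad_def, Finset.mem_filter]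
      exact ⟨Finset.mem_univ y, (Finset.mem_filter.mp hy).2⟩
    have hpart2 : ∑ y ∈ T.filter (fun y => ¬(∑ i, (L (y i) - μ) ≤ -((n:ℝ) * ε))), ∏ i, w (y i)
        ≤ (2:ℝ) ^ (-((n:ℝ) * (ε/2))) := by
      have hstep : ∑ y ∈ T.filter (fun y => ¬(∑ i, (L (y i) - μ) ≤ -((n:ℝ) * ε))), ∏ i, w (y i)
          ≤ ((T.card : ℝ)) * (2:ℝ) ^ (-((n:ℝ) * (μ - ε))) := by
        calc ∑ y ∈ T.filter (fun y => ¬(∑ i, (L (y i) - μ) ≤ -((n:ℝ) * ε))), ∏ i, w (y i)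
            ≤ ∑ _y ∈ T.filter (fun y => ¬(∑ i, (L (y i) - μ) ≤ -((n:ℝ) * ε))),
                (2:ℝ) ^ (-((n:ℝ) * (μ - ε))) :=
              Finset.sum_le_sum fun y hy => hQle y (Finset.mem_filter.mp hy).2
          _ = ((T.filter (fun y => ¬(∑ i, (L (y i) - μ) ≤ -((n:ℝ) * ε)))).card : ℝ)
                * (2:ℝ) ^ (-((n:ℝ) * (μ - ε))) := by
              rw [Finset.sum_const, nsmul_eq_mul]
          _ ≤ ((T.card : ℝ)) * (2:ℝ) ^ (-((n:ℝ) * (μ - ε))) := by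
              refine mul_le_mul_of_nonneg_right ?_ hrpow0
              exact_mod_cast Finset.card_filter_le _ _
      refine hstep.trans ?_
      calc ((T.card : ℝ)) * (2:ℝ) ^ (-((n:ℝ) * (μ - ε)))
          ≤ (2:ℝ) ^ ((n:ℝ) * (r + ε/2)) * (2:ℝ) ^ (-((n:ℝ) * (μ - ε))) :=
            mul_le_mul_of_nonneg_right hcard_bound hrpow0
        _ = (2:ℝ) ^ ((n:ℝ) * (r + ε/2) + -((n:ℝ) * (μ - ε))) := (Real.rpow_add two_pos _ _).symm
        _ ≤ (2:ℝ) ^ (-((n:ℝ) * (ε/2))) := by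
            apply Real.rpow_le_rpow_of_exponent_le one_le_two
            have hmul : (n:ℝ) * (r + 2*ε) ≤ (n:ℝ) * μ :=
              mul_le_mul_of_nonneg_left hμ (by positivity)
            nlinarith
    calc ∑ x ∈ 𝒮, ∏ i, p (x i) ≤ ∑ y ∈ T, ∏ i, w (y i) := hA1
      _ = _ + _ := hsplit
      _ ≤ V / ((n:ℝ) * ε^2) + (2:ℝ) ^ (-((n:ℝ) * (ε/2))) := add_le_add hpart1 hpart2
      _ ≤ 1/4 + 1/4 := add_le_add hv4 hp4
      _ = 1/2 := by norm_num
  -- wrap up in ℝ≥0∞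
  set Wen : (Fin n → ℕ) → ENNReal := fun x => ∏ i, ENNReal.ofReal (p (x i)) with hWen_def
  have htotal : ∑' x : Fin n → ℕ, Wen x = 1 := by
    rw [hWen_def]
    rw [tsum_pi_pow (fun k => ENNReal.ofReal (p k)) n,
      ← ENNReal.ofReal_tsum_of_nonneg hp0 hps, hp1, ENNReal.ofReal_one, one_pow]
  set s : Set (Fin n → ℕ) := {x | G (F x) ≠ x} with hs_def
  have hcompl : ∑' x : ↥s, Wen x + ∑' x : ↥sᶜ, Wen x = 1 := by
    rw [← htotal]
    exact Summable.tsum_add_tsum_compl ENNReal.summable ENNReal.summable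
  have hsubset : sᶜ ⊆ (↑𝒮 : Set (Fin n → ℕ)) := by
    intro x hx
    have hx' : G (F x) = x := not_not.mp hx
    simp only [h𝒮_def, Finset.coe_filter, Set.mem_setOf_eq, Finset.mem_image]
    exact ⟨⟨F x, Finset.mem_univ _, hx'⟩, hx'⟩
  have hgoodE : ∑' x : ↥sᶜ, Wen x ≤ ENNReal.ofReal (1/2) := by
    calc ∑' x : ↥sᶜ, Wen x = ∑' x, (sᶜ).indicator Wen x := _root_.tsum_subtype _ _
      _ ≤ ∑' x, (↑𝒮 : Set (Fin n → ℕ)).indicator Wen x :=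
          ENNReal.tsum_le_tsum (fun x =>
            Set.indicator_le_indicator_of_subset hsubset (fun _ => zero_le) x)
      _ = ∑' x : ↥(↑𝒮 : Set (Fin n → ℕ)), Wen x := (_root_.tsum_subtype _ _).symm
      _ = ∑ x ∈ 𝒮, Wen x := Finset.tsum_subtype 𝒮 Wen
      _ = ENNReal.ofReal (∑ x ∈ 𝒮, ∏ i, p (x i)) := by
          rw [ENNReal.ofReal_sum_of_nonneg
            (fun x _ => Finset.prod_nonneg fun i _ => hp0 _)]
          exact Finset.sum_congr rfl fun x _ =>
            (ENNReal.ofReal_prod_of_nonneg fun i _ => hp0 _).symm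
      _ ≤ ENNReal.ofReal (1/2) := ENNReal.ofReal_le_ofReal hgood
  have hbadE : ENNReal.ofReal (1/2) ≤ ∑' x : ↥s, Wen x := by
    by_contra hlt
    push_neg at hlt
    have h1 : ∑' x : ↥s, Wen x + ∑' x : ↥sᶜ, Wen x
        < ENNReal.ofReal (1/2) + ENNReal.ofReal (1/2) :=
      ENNReal.add_lt_add_of_lt_of_le (ne_top_of_le_ne_top ENNReal.ofReal_ne_top hgoodE) hlt hgoodE
    rw [hcompl, ← ENNReal.ofReal_add (by norm_num) (by norm_num)] at h1
    norm_num at h1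
  have hne : (∑' x : ↥s, Wen x) ≠ ⊤ := by
    intro htop
    rw [htop] at hcompl
    simp at hcompl
  have hsummable : Summable (fun x : ↥s => ∏ i, p (x.1 i)) := by
    have h1 := ENNReal.summable_toReal hne
    refine h1.congr fun x => ?_
    rw [hWen_def]
    simp only [ENNReal.toReal_prod]
    exact Finset.prod_congr rfl fun i _ => ENNReal.toReal_ofReal (hp0 _)
  have hofreal : ENNReal.ofReal (∑' x : ↥s, ∏ i, p (x.1 i)) = ∑' x : ↥s, Wen x := by
    rw [ENNReal.ofReal_tsum_of_nonneg (fun x => Finset.prod_nonneg fun i _ => hp0 _) hsummable]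
    exact tsum_congr fun x => ENNReal.ofReal_prod_of_nonneg fun i _ => hp0 _
  have hfinal : ENNReal.ofReal (1/2) ≤ ENNReal.ofReal (∑' x : ↥s, ∏ i, p (x.1 i)) := by
    rw [hofreal]; exact hbadE
  have := (ENNReal.ofReal_le_ofReal_iff
    (tsum_nonneg fun x => Finset.prod_nonneg fun i _ => hp0 _)).mp hfinal
  exact this
end
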